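/- Let Q be a finite quiver without edge loops on nonempty vertex set Q0, with Euler matrix E (E i i = 1, and E i j = −(number of arrows i → j) ≤ 0 for i ≠ j), Euler form ⟨x,y⟩ := Σ_{i,j} x i E i j y j, and Cartan form (x,y) := ⟨x,y⟩ + ⟨y,x⟩. Let G_τ(t) ∈ ℚ((t)) denote the normalized Hua series of a nonzero dimension vector τ (defined in the context). Let δ : Q0 → ℕ satisfy condition (∗) for the Cartan form and let d : Q0 → ℕ satisfy supp d ∪ supp δ = Q0. Then for every i ∈ ℕ there exists N ∈ ℕ such that for all n ≥ N, the coefficient of t^i in G_{d+n·δ}(t) equals the coefficient of t^i in (1 − t) · P(t)^{|supp δ|} · ∏_{j ∉ supp δ} φ_{d j}(t)^{−1}, where P(t) = Σ_m p(m) t^m is the partition generating function. -/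

import Mathlib

open Finset

noncomputable section

/-- The bilinear form associated to an integer matrix `E`:
`⟨x, y⟩ = Σ_{i,j} x i * E i j * y j`. -/
def bform {Q0 : Type*} [Fintype Q0] (E : Q0 → Q0 → ℤ) (x y : Q0 → ℤ) : ℤ :=
  ∑ i, ∑ j, x i * E i j * y j

/-- A dimension vector `Q0 → ℕ` viewed as an integer vector. -/
def nvec {Q0 : Type*} (v : Q0 → ℕ) : Q0 → ℤ := fun i => (v i : ℤ)

/-- The variable `t` of `ℚ((t))`. -/
def tls : LaurentSeries ℚ := ((PowerSeries.X : PowerSeries ℚ) : LaurentSeries ℚ)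

/-- `φ_N(t) = ∏_{j=1}^N (1 - t^j)` as an element of `ℚ((t))`. -/
def phiL (N : ℕ) : LaurentSeries ℚ := ∏ j ∈ Finset.Icc 1 N, (1 - tls ^ j)

/-- `φ_v(t) = ∏_{i ∈ Q0} φ_{v i}(t)` for a dimension vector `v`. -/
def phiV {Q0 : Type*} [Fintype Q0] (v : Q0 → ℕ) : LaurentSeries ℚ := ∏ i, phiL (v i)

open Classical in
/-- `K_α(t)`: the sum over all finite componentwise weakly decreasing sequences
`d^1 ≥ d^2 ≥ … ≥ d^s` of nonzero dimension vectors with `Σ d^k = α` of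
`t^{Σ_k ⟨d^k, d^k⟩} / ∏_k φ_{d^k - d^{k+1}}(t)` (with `d^{s+1} = 0`). Such a sequence
is encoded as a componentwise weakly decreasing, eventually zero function
`D : ℕ → Q0 → ℕ` with `Σ_k D k = α`. -/
def Kser {Q0 : Type*} [Fintype Q0] (E : Q0 → Q0 → ℤ) (α : Q0 → ℕ) : LaurentSeries ℚ :=
  ∑ᶠ D : ℕ → Q0 → ℕ,
    if (∀ k i, D (k + 1) i ≤ D k i) ∧ (∃ s : ℕ, ∀ k, s ≤ k → D k = 0) ∧
        (∀ i, ∑ᶠ k, D k i = α i) then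
      tls ^ (∑ᶠ k : ℕ, bform E (nvec (D k)) (nvec (D k))) /
        ∏ᶠ k : ℕ, phiV (fun i => D k i - D (k + 1) i)
    else 0

open Classical in
/-- The inner sum of Hua's formula: the sum over ordered tuples `(α^1, …, α^l)` of nonzero
dimension vectors with `α^1 + … + α^l = τ` of `∏_i K_{α^i}(t)`. -/
def huaInner {Q0 : Type*} [Fintype Q0] (E : Q0 → Q0 → ℤ) (τ : Q0 → ℕ) (l : ℕ) :
    LaurentSeries ℚ :=
  ∑ᶠ A : Fin l → Q0 → ℕ,
    if (∀ k, A k ≠ 0) ∧ (∀ i, ∑ k, A k i = τ i) then ∏ k, Kser E (A k) else 0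

/-- The normalized Hua series
`G_τ(t) = t^{-⟨τ,τ⟩} (1 - t) Σ_{l=1}^{|τ|} ((-1)^{l+1}/l) Σ_{α^1+…+α^l=τ} ∏_i K_{α^i}(t)`.
For an indivisible imaginary root `τ` this equals `Σ_i a_i^{(τ)} t^i` where
`A_τ(q) = Σ_i a_i^{(τ)} q^{1-⟨τ,τ⟩-i}` is the Kac polynomial. -/
def Gser {Q0 : Type*} [Fintype Q0] (E : Q0 → Q0 → ℤ) (τ : Q0 → ℕ) : LaurentSeries ℚ :=
  tls ^ (-bform E (nvec τ) (nvec τ)) * (1 - tls) *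
    ∑ l ∈ Finset.Icc 1 (∑ i, τ i),
      ((-1 : LaurentSeries ℚ) ^ (l + 1) / (l : LaurentSeries ℚ)) * huaInner E τ l

/-- The partition generating function `P(t) = Σ_m p(m) t^m` as an element of `ℚ((t))`. -/
def partGFL : LaurentSeries ℚ :=
  ((PowerSeries.mk fun m => (Nat.card (Nat.Partition m) : ℚ) : PowerSeries ℚ) :
    LaurentSeries ℚ)

end

/-- The underlying simple graph of a quiver with (symmetric Cartan) matrix `C`:
`i` adjacent to `j` iff `i ≠ j` and the pairing is negative. -/
def quivGraph {Q0 : Type*} (C : Q0 → Q0 → ℤ) : SimpleGraph Q0 where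
  Adj i j := i ≠ j ∧ (C i j < 0 ∨ C j i < 0)
  symm := ⟨fun _ _ h => ⟨h.1.symm, h.2.symm⟩⟩
  loopless := ⟨fun _ h => h.1 rfl⟩

/-- The subgraph of `quivGraph C` induced on the support of `δ`. -/
def suppGraph {Q0 : Type*} (C : Q0 → Q0 → ℤ) (δ : Q0 → ℕ) :
    SimpleGraph {i : Q0 // δ i ≠ 0} :=
  (quivGraph C).comap Subtype.val

/-- Condition (∗) for the form given by `C`: `(e_i, δ) < 0` for every vertex `i`, and any
two connected components of the subgraph induced on `supp δ` are at distance at most one,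
i.e. either they are joined by an edge or some vertex is adjacent to both. -/
def condStar {Q0 : Type*} [Fintype Q0] [DecidableEq Q0]
    (C : Q0 → Q0 → ℤ) (δ : Q0 → ℕ) : Prop :=
  (∀ i : Q0, bform C (Pi.single i 1) (nvec δ) < 0) ∧
    ∀ u v : {i : Q0 // δ i ≠ 0},
      (suppGraph C δ).Reachable u v ∨
        ∃ x y : {i : Q0 // δ i ≠ 0},
          (suppGraph C δ).Reachable u x ∧ (suppGraph C δ).Reachable v y ∧
            ((quivGraph C).Adj x.1 y.1 ∨
              ∃ w : Q0, (quivGraph C).Adj w x.1 ∧ (quivGraph C).Adj w y.1)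

noncomputable section
namespace KS

theorem tls_pow_nat (n : ℕ) : tls ^ n = HahnSeries.single (n : ℤ) 1 := by
  induction n with
  | zero => simp
  | succ n ih =>
    rw [pow_succ, ih, tls, HahnSeries.ofPowerSeries_X, HahnSeries.single_mul_single]
    push_cast; ring_nf

theorem tls_zpow (z : ℤ) : tls ^ z = HahnSeries.single z 1 := by
  cases z with
  | ofNat n => rw [Int.ofNat_eq_coe, zpow_natCast, tls_pow_nat]
  | negSucc n =>
    rw [zpow_negSucc, tls_pow_nat]
    refine inv_eq_of_mul_eq_one_left ?_
    rw [HahnSeries.single_mul_single, one_mul]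
    have : Int.negSucc n + (↑(n + 1) : ℤ) = 0 := by
      rw [Int.negSucc_eq]; push_cast; ring
    rw [this]; rfl

theorem tls_ne_zero : tls ≠ 0 := by
  intro h
  have := congrArg (fun f => HahnSeries.coeff f 1) h
  simp [tls, HahnSeries.ofPowerSeries_X] at this

theorem tls_zpow_mul_coeff (z : ℤ) (f : LaurentSeries ℚ) (i : ℤ) :
    (tls ^ z * f).coeff i = f.coeff (i - z) := by
  rw [tls_zpow]
  have : i = (i - z) + z := by ring
  rw [this, HahnSeries.coeff_single_mul_add, one_mul]
  ring_nf

/-- The valuation predicate: `f` is `tls^j` times a power series. -/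
def Val (j : ℤ) (f : LaurentSeries ℚ) : Prop :=
  ∃ p : PowerSeries ℚ, f = tls ^ j * ↑p

theorem Val.zero (j : ℤ) : Val j 0 := ⟨0, by simp⟩

theorem Val.coe (p : PowerSeries ℚ) : Val 0 (↑p : LaurentSeries ℚ) := ⟨p, by simp⟩

theorem Val.coeff_eq_zero {j : ℤ} {f : LaurentSeries ℚ} (h : Val j f) {i : ℤ} (hi : i < j) :
    f.coeff i = 0 := by
  obtain ⟨p, rfl⟩ := h
  rw [tls_zpow_mul_coeff, PowerSeries.coeff_coe, if_pos (by omega)]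

theorem Val.add {j : ℤ} {f g : LaurentSeries ℚ} (hf : Val j f) (hg : Val j g) :
    Val j (f + g) := by
  obtain ⟨p, rfl⟩ := hf; obtain ⟨q, rfl⟩ := hg
  exact ⟨p + q, by push_cast [mul_add]; ring⟩

theorem Val.mul {a b : ℤ} {f g : LaurentSeries ℚ} (hf : Val a f) (hg : Val b g) :
    Val (a + b) (f * g) := by
  obtain ⟨p, rfl⟩ := hf; obtain ⟨q, rfl⟩ := hg
  refine ⟨p * q, ?_⟩
  rw [zpow_add₀ tls_ne_zero]
  push_cast
  ring

theorem Val.mono {a b : ℤ} (hab : a ≤ b) {f : LaurentSeries ℚ} (h : Val b f) : Val a f := by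
  obtain ⟨p, rfl⟩ := h
  refine ⟨PowerSeries.X ^ (b - a).toNat * p, ?_⟩
  push_cast
  rw [← mul_assoc]
  congr 1
  have hX : ((PowerSeries.X : PowerSeries ℚ) : LaurentSeries ℚ) = tls := rfl
  rw [hX, ← zpow_natCast tls, ← zpow_add₀ tls_ne_zero]
  congr 1
  omega

theorem Val.sum {j : ℤ} {ι : Type*} (s : Finset ι) (f : ι → LaurentSeries ℚ)
    (h : ∀ x ∈ s, Val j (f x)) : Val j (∑ x ∈ s, f x) := by
  classical
  induction s using Finset.induction_on with
  | empty => simpa using Val.zero j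
  | insert _ _ hx ih =>
    rw [Finset.sum_insert hx]
    exact (h _ (Finset.mem_insert_self _ _)).add (ih fun x hxs => h x (Finset.mem_insert_of_mem hxs))

theorem Val.finsum {j : ℤ} {ι : Type*} (f : ι → LaurentSeries ℚ) (h : ∀ x, Val j (f x)) :
    Val j (∑ᶠ x, f x) := by
  by_cases hf : (Function.support f).Finite
  · rw [finsum_eq_sum f hf]
    exact Val.sum _ _ fun x _ => h x
  · rw [finsum_of_infinite_support hf]
    exact Val.zero j

theorem Val.coe_inv (p : PowerSeries ℚ) (hp : PowerSeries.constantCoeff p ≠ 0) :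
    (↑p : LaurentSeries ℚ)⁻¹ = ((p⁻¹ : PowerSeries ℚ) : LaurentSeries ℚ) := by
  refine inv_eq_of_mul_eq_one_right ?_
  rw [← PowerSeries.coe_mul, PowerSeries.mul_inv_cancel _ hp, PowerSeries.coe_one]


variable {Q0 : Type*} [Fintype Q0]

theorem bform_zero_left (E : Q0 → Q0 → ℤ) (y : Q0 → ℤ) : bform E 0 y = 0 := by
  unfold bform; simp

theorem bform_zero_right (E : Q0 → Q0 → ℤ) (x : Q0 → ℤ) : bform E x 0 = 0 := by
  unfold bform; simp

theorem bform_add_left (E : Q0 → Q0 → ℤ) (u v y : Q0 → ℤ) :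
    bform E (fun i => u i + v i) y = bform E u y + bform E v y := by
  unfold bform
  rw [← Finset.sum_add_distrib]
  refine Finset.sum_congr rfl fun i _ => ?_
  rw [← Finset.sum_add_distrib]
  exact Finset.sum_congr rfl fun j _ => by ring

theorem bform_add_right (E : Q0 → Q0 → ℤ) (x u v : Q0 → ℤ) :
    bform E x (fun i => u i + v i) = bform E x u + bform E x v := by
  unfold bform
  rw [← Finset.sum_add_distrib]
  refine Finset.sum_congr rfl fun i _ => ?_
  rw [← Finset.sum_add_distrib]
  exact Finset.sum_congr rfl fun j _ => by ring

theorem bform_sum_left {ι : Type*} (E : Q0 → Q0 → ℤ) (s : Finset ι) (x : ι → Q0 → ℤ)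
    (y : Q0 → ℤ) : bform E (fun i => ∑ m ∈ s, x m i) y = ∑ m ∈ s, bform E (x m) y := by
  classical
  induction s using Finset.cons_induction with
  | empty => simp; exact bform_zero_left E y
  | cons a s ha ih =>
    simp only [Finset.sum_cons]
    rw [bform_add_left, ih]

theorem bform_sum_right {ι : Type*} (E : Q0 → Q0 → ℤ) (s : Finset ι) (x : Q0 → ℤ)
    (y : ι → Q0 → ℤ) : bform E x (fun i => ∑ m ∈ s, y m i) = ∑ m ∈ s, bform E x (y m) := by
  classical
  induction s using Finset.cons_induction with
  | empty => simp; exact bform_zero_right E x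
  | cons a s ha ih =>
    simp only [Finset.sum_cons]
    rw [bform_add_right, ih]

theorem bform_sub_right (E : Q0 → Q0 → ℤ) (x y z : Q0 → ℤ) :
    bform E x (fun i => y i - z i) = bform E x y - bform E x z := by
  unfold bform
  rw [← Finset.sum_sub_distrib]
  refine Finset.sum_congr rfl fun i _ => ?_
  rw [← Finset.sum_sub_distrib]
  exact Finset.sum_congr rfl fun j _ => by ring

theorem bform_single_left [DecidableEq Q0] (E : Q0 → Q0 → ℤ) (j : Q0) (y : Q0 → ℤ) :
    bform E (Pi.single j 1) y = ∑ k, E j k * y k := by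
  unfold bform
  rw [Finset.sum_eq_single j]
  · exact Finset.sum_congr rfl fun k _ => by simp
  · intro b _ hb
    apply Finset.sum_eq_zero
    intro k _
    simp [Pi.single_eq_of_ne hb]
  · simp

/-- `bform` of the symmetrized matrix. -/
theorem bform_symm_eq (E : Q0 → Q0 → ℤ) (x y : Q0 → ℤ) :
    bform (fun i j => E i j + E j i) x y = bform E x y + bform E y x := by
  have hyx : bform E y x = ∑ i, ∑ j, y j * E j i * x i := by
    unfold bform
    exact Finset.sum_comm
  rw [hyx]
  unfold bform
  rw [← Finset.sum_add_distrib]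
  refine Finset.sum_congr rfl fun i _ => ?_
  rw [← Finset.sum_add_distrib]
  exact Finset.sum_congr rfl fun j _ => by ring

-- the symmetrized Cartan pairing
variable {Q0 : Type*} [Fintype Q0]

/-- sum is at most a single term, when all terms are nonpositive -/
theorem sum_le_single_nonpos {ι : Type*} {s : Finset ι} {f : ι → ℤ} {a : ι} (ha : a ∈ s)
    (h : ∀ x ∈ s, f x ≤ 0) : ∑ x ∈ s, f x ≤ f a := by
  classical
  rw [← Finset.add_sum_erase s f ha]
  have : ∑ x ∈ s.erase a, f x ≤ 0 :=
    Finset.sum_nonpos fun x hx => h x (Finset.mem_of_mem_erase hx)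
  omega

theorem sum_le_single_nonpos_q {ι : Type*} {s : Finset ι} {f : ι → ℚ} {a : ι} (ha : a ∈ s)
    (h : ∀ x ∈ s, f x ≤ 0) : ∑ x ∈ s, f x ≤ f a := by
  classical
  rw [← Finset.add_sum_erase s f ha]
  have : ∑ x ∈ s.erase a, f x ≤ 0 :=
    Finset.sum_nonpos fun x hx => h x (Finset.mem_of_mem_erase hx)
  linarith

/-- The main quadratic inequality over `ℚ`: symmetrization estimate. -/
theorem quad_est (c : Q0 → Q0 → ℚ) (hsym : ∀ i j, c i j = c j i)
    (hoff : ∀ i j, i ≠ j → c i j ≤ 0) (T X Y : Q0 → ℚ) (hT : ∀ j, 0 < T j)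
    (hXY : ∀ j, X j + Y j = T j) (hX : ∀ j, 0 ≤ X j) (hY : ∀ j, 0 ≤ Y j) :
    ∑ i, ∑ j, c i j * X i * Y j ≤ ∑ j, X j * Y j / T j * ∑ i, c i j * T i := by
  classical
  have key : ∀ i j, c i j * X i * Y j + c j i * X j * Y i ≤
      X j * Y j / T j * (c i j * T i) + X i * Y i / T i * (c j i * T j) := by
    intro i j
    by_cases hij : i = j
    · subst hij
      have : X i * Y i / T i * (c i i * T i) = c i i * X i * Y i * (T i / T i) := by ring
      rw [this, div_self (hT i).ne', mul_one]
    · have h1 : (X i * Y j + X j * Y i) * (T i * T j) -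
          (T i * T i * (X j * Y j) + T j * T j * (X i * Y i)) = (X i * T j - X j * T i) ^ 2 := by
        have hYi : Y i = T i - X i := by linarith [hXY i]
        have hYj : Y j = T j - X j := by linarith [hXY j]
        rw [hYi, hYj]; ring
      have h2 : T i * T j > 0 := mul_pos (hT i) (hT j)
      have h3 : X j * Y j / T j * T i + X i * Y i / T i * T j ≤ X i * Y j + X j * Y i := by
        rw [div_mul_eq_mul_div, div_mul_eq_mul_div, div_add_div _ _ (hT j).ne' (hT i).ne',
          div_le_iff₀ (mul_pos (hT j) (hT i))]
        nlinarith [sq_nonneg (X i * T j - X j * T i)]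
      have hc := hoff i j hij
      have h4 : c i j * (X i * Y j + X j * Y i) ≤
          c i j * (X j * Y j / T j * T i + X i * Y i / T i * T j) :=
        mul_le_mul_of_nonpos_left h3 hc
      rw [← hsym i j]
      nlinarith [h4]
  -- now sum up
  have hsum : (∑ i, ∑ j, c i j * X i * Y j) + (∑ i, ∑ j, c i j * X i * Y j) ≤
      (∑ j, X j * Y j / T j * ∑ i, c i j * T i) + (∑ j, X j * Y j / T j * ∑ i, c i j * T i) := by
    have e1 : (∑ i, ∑ j, c i j * X i * Y j) = ∑ i, ∑ j, c j i * X j * Y i := Finset.sum_comm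
    calc (∑ i, ∑ j, c i j * X i * Y j) + (∑ i, ∑ j, c i j * X i * Y j)
        = ∑ i, ∑ j, (c i j * X i * Y j + c j i * X j * Y i) := by
          nth_rewrite 2 [e1]
          rw [← Finset.sum_add_distrib]
          refine Finset.sum_congr rfl fun i _ => ?_
          rw [← Finset.sum_add_distrib]
      _ ≤ ∑ i, ∑ j, (X j * Y j / T j * (c i j * T i) + X i * Y i / T i * (c j i * T j)) := by
          refine Finset.sum_le_sum fun i _ => Finset.sum_le_sum fun j _ => key i j
      _ = (∑ j, X j * Y j / T j * ∑ i, c i j * T i) + (∑ j, X j * Y j / T j * ∑ i, c i j * T i) := by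
          have eA : (∑ i, ∑ j, (X j * Y j / T j * (c i j * T i) + X i * Y i / T i * (c j i * T j)))
              = (∑ i, ∑ j, X j * Y j / T j * (c i j * T i)) +
                (∑ i, ∑ j, X i * Y i / T i * (c j i * T j)) := by
            rw [← Finset.sum_add_distrib]
            refine Finset.sum_congr rfl fun i _ => ?_
            rw [← Finset.sum_add_distrib]
          have eB : (∑ i, ∑ j, X i * Y i / T i * (c j i * T j))
              = ∑ i, ∑ j, X j * Y j / T j * (c i j * T i) := Finset.sum_comm
          have eC : (∑ i, ∑ j, X j * Y j / T j * (c i j * T i))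
              = ∑ j, X j * Y j / T j * ∑ i, c i j * T i := by
            rw [Finset.sum_comm]
            refine Finset.sum_congr rfl fun j _ => ?_
            rw [Finset.mul_sum]
          rw [eA, eB, eC]
  linarith
end KS
end


section
noncomputable section
open Finset
namespace KS

variable {Q0 : Type*} [Fintype Q0] [DecidableEq Q0]

theorem walk_cross {V : Type*} (G : SimpleGraph V) (Pr : V → Prop) :
    ∀ {u v : V}, G.Walk u v → Pr u → ¬Pr v → ∃ a b, G.Adj a b ∧ Pr a ∧ ¬Pr b := by
  intro u v w
  induction w with
  | nil => exact fun h h' => absurd h h'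
  | @cons a b c h p ih =>
    intro hu hv
    by_cases h2 : Pr b
    · exact ih h2 hv
    · exact ⟨a, b, h, hu, h2⟩

omit [DecidableEq Q0] in
theorem bform_eq_sum_row (E : Q0 → Q0 → ℤ) (x y : Q0 → ℤ) :
    bform E x y = ∑ i, x i * ∑ j, E i j * y j := by
  unfold bform
  refine Finset.sum_congr rfl fun i _ => ?_
  rw [Finset.mul_sum]
  exact Finset.sum_congr rfl fun j _ => by ring

omit [DecidableEq Q0] in
theorem bform_eq_sum_col (E : Q0 → Q0 → ℤ) (x y : Q0 → ℤ) :
    bform E x y = ∑ j, (∑ i, x i * E i j) * y j := by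
  unfold bform
  rw [Finset.sum_comm]
  refine Finset.sum_congr rfl fun j _ => ?_
  rw [Finset.sum_mul]

theorem quiv_adj_le {C : Q0 → Q0 → ℤ} (hCsym : ∀ i j, C i j = C j i) {a b : Q0}
    (h : (quivGraph C).Adj a b) : C a b ≤ -1 := by
  obtain ⟨hne, h2⟩ := h
  rcases h2 with h2 | h2
  · omega
  · rw [hCsym a b]; omega

/-- Lemma B : the key estimate on the Cartan pairing of a decomposition `τ_n = x + y`. -/
theorem lemmaB (E : Q0 → Q0 → ℤ) (hdiag : ∀ i, E i i = 1)
    (hoff : ∀ i j, i ≠ j → E i j ≤ 0) (δ : Q0 → ℕ)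
    (hδ : condStar (fun i j => E i j + E j i) δ) (d : Q0 → ℕ)
    (hsupp : ∀ i, d i ≠ 0 ∨ δ i ≠ 0) (J : ℤ) (hJ : 0 ≤ J) :
    ∃ N : ℕ, 1 ≤ N ∧ ∀ n : ℕ, N ≤ n → ∀ x y : Q0 → ℕ,
      (∀ j, x j + y j = d j + n * δ j) → x ≠ 0 → y ≠ 0 →
      bform (fun i j => E i j + E j i) (nvec x) (nvec y) ≤ -J := by
  classical
  set C : Q0 → Q0 → ℤ := fun i j => E i j + E j i with hC
  have hCsym : ∀ i j, C i j = C j i := fun i j => by simp only [hC]; ring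
  have hCoff : ∀ i j, i ≠ j → C i j ≤ 0 := fun i j hij => by
    have h1 := hoff i j hij
    have h2 := hoff j i (Ne.symm hij)
    simp only [hC]; omega
  have hrowδ : ∀ j, (∑ k, C j k * (δ k : ℤ)) ≤ -1 := by
    intro j
    have h0 := hδ.1 j
    rw [bform_single_left] at h0
    have h : (∑ k, C j k * nvec δ k) = ∑ k, C j k * (δ k : ℤ) := rfl
    omega
  set Kd : ℤ := ∑ j, ∑ k, |C j k| * (d k : ℤ) with hKd
  have hKdnn : 0 ≤ Kd := Finset.sum_nonneg fun j _ => Finset.sum_nonneg fun k _ =>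
    mul_nonneg (abs_nonneg _) (Int.natCast_nonneg _)
  have hrowbd : ∀ (j : Q0) (v : Q0 → ℕ), (∀ k, v k ≤ d k) → |∑ k, C j k * (v k : ℤ)| ≤ Kd := by
    intro j v hv
    calc |∑ k, C j k * (v k : ℤ)| ≤ ∑ k, |C j k * (v k : ℤ)| := Finset.abs_sum_le_sum_abs _ _
      _ ≤ ∑ k, |C j k| * (d k : ℤ) := by
          refine Finset.sum_le_sum fun k _ => ?_
          rw [abs_mul, abs_of_nonneg (Int.natCast_nonneg (v k))]
          have h1 : (v k : ℤ) ≤ d k := by exact_mod_cast hv k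
          nlinarith [abs_nonneg (C j k)]
      _ ≤ Kd := by
          refine Finset.single_le_sum (f := fun j => ∑ k, |C j k| * (d k : ℤ)) ?_ (mem_univ j)
          intro i _
          exact Finset.sum_nonneg fun k _ => mul_nonneg (abs_nonneg _) (Int.natCast_nonneg _)
  refine ⟨(2 * Kd + 2 * J + 1).toNat + 1, by omega, ?_⟩
  intro n hn x y hxy hx hy
  have hnZ : 2 * Kd + 2 * J + 1 ≤ (n : ℤ) := by
    have h1 := Int.self_le_toNat (2 * Kd + 2 * J + 1)
    have h2 : ((2 * Kd + 2 * J + 1).toNat : ℤ) + 1 ≤ (n : ℤ) := by exact_mod_cast hn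
    omega
  have hn1 : (1 : ℤ) ≤ (n : ℤ) := by omega
  set τZ : Q0 → ℤ := fun j => (d j : ℤ) + n * δ j with hτZ
  have hτpos : ∀ j, 1 ≤ τZ j := by
    intro j
    have hnδ : (0 : ℤ) ≤ (n : ℤ) * δ j := by positivity
    rcases hsupp j with h | h
    · have hd : 1 ≤ (d j : ℤ) := by exact_mod_cast Nat.one_le_iff_ne_zero.mpr h
      simp only [hτZ]; omega
    · have hd : 1 ≤ (δ j : ℤ) := by exact_mod_cast Nat.one_le_iff_ne_zero.mpr h
      have : (1 : ℤ) * 1 ≤ (n : ℤ) * δ j := mul_le_mul hn1 hd (by norm_num) (by omega)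
      simp only [hτZ]
      have : (0:ℤ) ≤ (d j : ℤ) := Int.natCast_nonneg _
      omega
  have hτn : ∀ j, δ j ≠ 0 → (n : ℤ) ≤ τZ j := by
    intro j h
    have hd : 1 ≤ (δ j : ℤ) := by exact_mod_cast Nat.one_le_iff_ne_zero.mpr h
    have h1 : (n : ℤ) * 1 ≤ (n : ℤ) * δ j := mul_le_mul_of_nonneg_left hd (by omega)
    have h2 : (0:ℤ) ≤ (d j : ℤ) := Int.natCast_nonneg _
    simp only [hτZ]; omega
  have hxyZ : ∀ j, (x j : ℤ) + (y j : ℤ) = τZ j := by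
    intro j
    have := hxy j
    simp only [hτZ]
    exact_mod_cast this
  have hrowτ : ∀ j, (∑ k, C j k * τZ k) ≤ Kd - n := by
    intro j
    have e : (∑ k, C j k * τZ k) =
        (∑ k, C j k * (d k : ℤ)) + (n : ℤ) * ∑ k, C j k * (δ k : ℤ) := by
      rw [Finset.mul_sum, ← Finset.sum_add_distrib]
      refine Finset.sum_congr rfl fun k _ => ?_
      simp only [hτZ]; ring
    have h1 : (∑ k, C j k * (d k : ℤ)) ≤ Kd :=
      le_trans (le_abs_self _) (hrowbd j d fun k => le_refl _)
    have h2 : (n : ℤ) * (∑ k, C j k * (δ k : ℤ)) ≤ (n : ℤ) * (-1) :=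
      mul_le_mul_of_nonneg_left (hrowδ j) (by omega)
    omega
  have hbform : bform C (nvec x) (nvec y) = ∑ i, ∑ j, (x i : ℤ) * C i j * (y j : ℤ) := rfl
  by_cases hov : ∃ j, 1 ≤ x j ∧ 1 ≤ y j
  · -- overlap case
    obtain ⟨j₀, hx0, hy0⟩ := hov
    set XQ : Q0 → ℚ := fun j => (x j : ℚ) with hXQ
    set YQ : Q0 → ℚ := fun j => (y j : ℚ) with hYQ
    set TQ : Q0 → ℚ := fun j => ((τZ j : ℤ) : ℚ) with hTQ
    set cq : Q0 → Q0 → ℚ := fun i j => ((C i j : ℤ) : ℚ) with hcq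
    have hTpos : ∀ j, 0 < TQ j := fun j => by
      simp only [hTQ]; exact_mod_cast hτpos j
    have hq := quad_est cq (fun i j => by simp only [hcq]; exact_mod_cast hCsym i j)
      (fun i j hij => by simp only [hcq]; exact_mod_cast hCoff i j hij)
      TQ XQ YQ hTpos
      (fun j => by simp only [hXQ, hYQ, hTQ]; exact_mod_cast hxyZ j)
      (fun j => by simp only [hXQ]; positivity) (fun j => by simp only [hYQ]; positivity)
    have hRle : ∀ j, (∑ i, cq i j * TQ i) ≤ ((Kd - n : ℤ) : ℚ) := by
      intro j
      have h1 : (∑ i, C i j * τZ i) ≤ Kd - n := by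
        calc (∑ i, C i j * τZ i) = ∑ i, C j i * τZ i :=
              Finset.sum_congr rfl fun i _ => by rw [hCsym i j]
          _ ≤ Kd - n := hrowτ j
      calc (∑ i, cq i j * TQ i) = (((∑ i, C i j * τZ i : ℤ)) : ℚ) := by push_cast; rfl
        _ ≤ ((Kd - n : ℤ) : ℚ) := by exact_mod_cast h1
    have hKdnQ : ((Kd - n : ℤ) : ℚ) ≤ 0 := by
      have : Kd - n ≤ 0 := by omega
      exact_mod_cast this
    have hterm : ∀ j ∈ univ, XQ j * YQ j / TQ j * (∑ i, cq i j * TQ i) ≤ 0 := by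
      intro j _
      apply mul_nonpos_of_nonneg_of_nonpos
      · apply div_nonneg
        · apply mul_nonneg <;> simp only [hXQ, hYQ] <;> positivity
        · exact (hTpos j).le
      · exact le_trans (hRle j) hKdnQ
    have hsum2 : (∑ j, XQ j * YQ j / TQ j * ∑ i, cq i j * TQ i) ≤
        XQ j₀ * YQ j₀ / TQ j₀ * ∑ i, cq i j₀ * TQ i :=
      sum_le_single_nonpos_q (mem_univ j₀) hterm
    have hhalf : (1 : ℚ) / 2 ≤ XQ j₀ * YQ j₀ / TQ j₀ := by
      rw [le_div_iff₀ (hTpos j₀)]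
      have hX1 : (1 : ℚ) ≤ XQ j₀ := by simp only [hXQ]; exact_mod_cast hx0
      have hY1 : (1 : ℚ) ≤ YQ j₀ := by simp only [hYQ]; exact_mod_cast hy0
      have hT : XQ j₀ + YQ j₀ = TQ j₀ := by
        simp only [hXQ, hYQ, hTQ]; exact_mod_cast hxyZ j₀
      nlinarith
    have hR0 : (∑ i, cq i j₀ * TQ i) ≤ 0 := le_trans (hRle j₀) hKdnQ
    have hstep : XQ j₀ * YQ j₀ / TQ j₀ * (∑ i, cq i j₀ * TQ i) ≤
        1 / 2 * (∑ i, cq i j₀ * TQ i) := mul_le_mul_of_nonpos_right hhalf hR0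
    have hcast : ((bform C (nvec x) (nvec y) : ℤ) : ℚ) = ∑ i, ∑ j, cq i j * XQ i * YQ j := by
      rw [hbform]
      push_cast
      refine Finset.sum_congr rfl fun i _ => Finset.sum_congr rfl fun j _ => by
        simp only [hcq, hXQ, hYQ]; push_cast; ring
    have hfinal : ((bform C (nvec x) (nvec y) : ℤ) : ℚ) ≤ ((-J : ℤ) : ℚ) := by
      rw [hcast]
      have h6 : (1:ℚ)/2 * (∑ i, cq i j₀ * TQ i) ≤ 1/2 * ((Kd - n : ℤ) : ℚ) := by
        have := hRle j₀; linarith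
      have h7 : ((Kd : ℤ) : ℚ) - ((n:ℤ) : ℚ) ≤ -2 * ((J : ℤ) : ℚ) := by
        have : ((2 * Kd + 2 * J + 1 : ℤ) : ℚ) ≤ ((n : ℤ) : ℚ) := by exact_mod_cast hnZ
        have hk : (0:ℚ) ≤ ((Kd : ℤ) : ℚ) := by exact_mod_cast hKdnn
        push_cast at this ⊢
        linarith
      push_cast at h6 h7 ⊢
      linarith [hq, hsum2, hstep]
    exact_mod_cast hfinal
  · -- disjoint support case
    push_neg at hov
    have hdis : ∀ j, x j = 0 ∨ y j = 0 := by
      intro j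
      rcases Nat.eq_zero_or_pos (x j) with h | h
      · exact Or.inl h
      · exact Or.inr (by have h2 := hov j h; omega)
    -- basic consequences of disjointness
    have hfullx : ∀ j, x j ≠ 0 → (x j : ℤ) = τZ j ∧ y j = 0 := by
      intro j hj
      rcases hdis j with h | h
      · exact absurd h hj
      · refine ⟨?_, h⟩
        have := hxyZ j
        rw [h] at this
        push_cast at this
        omega
    have hfully : ∀ j, x j = 0 → (y j : ℤ) = τZ j := by
      intro j hj
      have := hxyZ j
      rw [hj] at this
      push_cast at this
      omega
    have htermnp : ∀ i j, (x i : ℤ) * C i j * (y j : ℤ) ≤ 0 := by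
      intro i j
      by_cases hij : i = j
      · subst hij
        rcases hdis i with h | h <;> simp [h]
      · have h1 : (x i : ℤ) * C i j ≤ 0 :=
          mul_nonpos_of_nonneg_of_nonpos (Int.natCast_nonneg _) (hCoff i j hij)
        exact mul_nonpos_of_nonpos_of_nonneg h1 (Int.natCast_nonneg _)
    -- crossing-pair bound
    have pairBound : ∀ a b : Q0, C a b ≤ -1 → x a ≠ 0 → x b = 0 → (δ a ≠ 0 ∨ δ b ≠ 0) →
        bform C (nvec x) (nvec y) ≤ -J := by
      intro a b hab ha hb hδab
      have h1 : bform C (nvec x) (nvec y) ≤ (x a : ℤ) * C a b * (y b : ℤ) := by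
        rw [hbform]
        calc (∑ i, ∑ j, (x i : ℤ) * C i j * (y j : ℤ))
            ≤ ∑ j, (x a : ℤ) * C a j * (y j : ℤ) :=
              sum_le_single_nonpos (mem_univ a)
                (fun i _ => Finset.sum_nonpos fun j _ => htermnp i j)
          _ ≤ (x a : ℤ) * C a b * (y b : ℤ) :=
              sum_le_single_nonpos (mem_univ b) (fun j _ => htermnp a j)
      have hxa : (x a : ℤ) = τZ a := (hfullx a ha).1
      have hyb : (y b : ℤ) = τZ b := hfully b hb
      have hbig : (n : ℤ) ≤ τZ a * τZ b := by
        rcases hδab with h | h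
        · have h2 := hτn a h
          have h3 := hτpos b
          nlinarith
        · have h2 := hτn b h
          have h3 := hτpos a
          nlinarith
      have h4 : (x a : ℤ) * C a b * (y b : ℤ) ≤ -(τZ a * τZ b) := by
        rw [hxa, hyb]
        nlinarith [hτpos a, hτpos b]
      omega
    by_cases hcross : ∃ u v : {i : Q0 // δ i ≠ 0}, (suppGraph C δ).Adj u v ∧ x u.1 ≠ 0 ∧ x v.1 = 0
    · obtain ⟨u, v, hadj, hu, hv⟩ := hcross
      have hq : (quivGraph C).Adj u.1 v.1 := hadj
      exact pairBound u.1 v.1 (quiv_adj_le hCsym hq) hu hv (Or.inl u.2)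
    · push_neg at hcross
      have hpres : ∀ u v : {i : Q0 // δ i ≠ 0}, (suppGraph C δ).Reachable u v →
          x u.1 ≠ 0 → x v.1 ≠ 0 := by
        intro u v hr hu
        intro hv
        obtain ⟨a, b, hab, ha, hb⟩ :=
          walk_cross (suppGraph C δ) (fun w => x w.1 ≠ 0) hr.some hu (by simpa using hv)
        exact hcross a b hab ha (by simpa using hb)
      by_cases hSP : ∃ j, δ j ≠ 0 ∧ x j ≠ 0
      · by_cases hSPc : ∃ j, δ j ≠ 0 ∧ x j = 0
        · -- mixed case: use condition (∗)(b)
          obtain ⟨j₁, hδ1, hx1⟩ := hSP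
          obtain ⟨j₂, hδ2, hx2⟩ := hSPc
          rcases hδ.2 ⟨j₁, hδ1⟩ ⟨j₂, hδ2⟩ with hr | ⟨x', y', hux, hvy, hor⟩
          · exact absurd hx2 (hpres ⟨j₁, hδ1⟩ ⟨j₂, hδ2⟩ hr hx1)
          · have hx' : x x'.1 ≠ 0 := hpres ⟨j₁, hδ1⟩ x' hux hx1
            have hy' : x y'.1 = 0 := by
              by_contra hny
              exact (hpres y' ⟨j₂, hδ2⟩ hvy.symm hny) hx2
            rcases hor with hadj | ⟨w, hw1, hw2⟩
            · exact pairBound x'.1 y'.1 (quiv_adj_le hCsym hadj) hx' hy' (Or.inl x'.2)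
            · by_cases hPw : x w = 0
              · have hwx : (quivGraph C).Adj x'.1 w := hw1.symm
                exact pairBound x'.1 w (quiv_adj_le hCsym hwx) hx' hPw (Or.inl x'.2)
              · exact pairBound w y'.1 (quiv_adj_le hCsym hw2) hPw hy' (Or.inr y'.2)
        · -- x is nonzero on all of supp δ, so y is supported off supp δ
          push_neg at hSPc
          have hybd : ∀ k, y k ≤ d k := by
            intro k
            by_cases hk : δ k = 0
            · have := hxy k
              rw [hk] at this
              omega
            · have := (hfullx k (hSPc k hk)).2
              omega
          obtain ⟨j₁, hy1⟩ := Function.ne_iff.mp hy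
          have hy1' : y j₁ ≠ 0 := hy1
          have hcol : ∀ j, (∑ i, (x i : ℤ) * C i j) ≤ 2 * Kd - n := by
            intro j
            have e1 : (∑ i, (x i : ℤ) * C i j) = ∑ i, C j i * (x i : ℤ) :=
              Finset.sum_congr rfl fun i _ => by rw [hCsym j i]; ring
            have e2 : (∑ i, C j i * (x i : ℤ)) =
                (∑ i, C j i * τZ i) - ∑ i, C j i * (y i : ℤ) := by
              rw [← Finset.sum_sub_distrib]
              refine Finset.sum_congr rfl fun i _ => ?_
              linear_combination (C j i) * (hxyZ i)
            have h3 : -(∑ i, C j i * (y i : ℤ)) ≤ Kd :=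
              le_trans (neg_le_abs _) (hrowbd j y hybd)
            have h4 := hrowτ j
            omega
          have hbb : bform C (nvec x) (nvec y) = ∑ j, (∑ i, (x i : ℤ) * C i j) * (y j : ℤ) :=
            bform_eq_sum_col C (nvec x) (nvec y)
          have h2Kd : 2 * Kd - (n : ℤ) ≤ 0 := by omega
          have hterm : ∀ j ∈ univ, (∑ i, (x i : ℤ) * C i j) * (y j : ℤ) ≤ 0 := fun j _ =>
            mul_nonpos_of_nonpos_of_nonneg (le_trans (hcol j) h2Kd) (Int.natCast_nonneg _)
          have h5 : bform C (nvec x) (nvec y) ≤ (∑ i, (x i : ℤ) * C i j₁) * (y j₁ : ℤ) := by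
            rw [hbb]
            exact sum_le_single_nonpos (mem_univ j₁) hterm
          have h6 : (1 : ℤ) ≤ (y j₁ : ℤ) := by exact_mod_cast Nat.one_le_iff_ne_zero.mpr hy1'
          have h7 : (∑ i, (x i : ℤ) * C i j₁) * (y j₁ : ℤ) ≤ 2 * Kd - n := by
            nlinarith [hcol j₁, h2Kd]
          omega
      · -- x is supported off supp δ
        push_neg at hSP
        have hxbd : ∀ k, x k ≤ d k := by
          intro k
          by_cases hk : δ k = 0
          · have := hxy k
            rw [hk] at this
            omega
          · rw [hSP k hk]
            omega
        obtain ⟨j₁, hx1⟩ := Function.ne_iff.mp hx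
        have hx1' : x j₁ ≠ 0 := hx1
        have hrow : ∀ i, (∑ j, C i j * (y j : ℤ)) ≤ 2 * Kd - n := by
          intro i
          have e2 : (∑ j, C i j * (y j : ℤ)) =
              (∑ j, C i j * τZ j) - ∑ j, C i j * (x j : ℤ) := by
            rw [← Finset.sum_sub_distrib]
            refine Finset.sum_congr rfl fun j _ => ?_
            linear_combination (C i j) * (hxyZ j)
          have h3 : -(∑ j, C i j * (x j : ℤ)) ≤ Kd :=
            le_trans (neg_le_abs _) (hrowbd i x hxbd)
          have h4 := hrowτ i
          omega
        have hbb : bform C (nvec x) (nvec y) = ∑ i, (x i : ℤ) * (∑ j, C i j * (y j : ℤ)) :=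
          bform_eq_sum_row C (nvec x) (nvec y)
        have h2Kd : 2 * Kd - (n : ℤ) ≤ 0 := by omega
        have hterm : ∀ i ∈ univ, (x i : ℤ) * (∑ j, C i j * (y j : ℤ)) ≤ 0 := fun i _ =>
          mul_nonpos_of_nonneg_of_nonpos (Int.natCast_nonneg _) (le_trans (hrow i) h2Kd)
        have h5 : bform C (nvec x) (nvec y) ≤ (x j₁ : ℤ) * (∑ j, C j₁ j * (y j : ℤ)) := by
          rw [hbb]
          exact sum_le_single_nonpos (mem_univ j₁) hterm
        have h6 : (1 : ℤ) ≤ (x j₁ : ℤ) := by exact_mod_cast Nat.one_le_iff_ne_zero.mpr hx1'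
        have h7 : (x j₁ : ℤ) * (∑ j, C j₁ j * (y j : ℤ)) ≤ 2 * Kd - n := by
          nlinarith [hrow j₁, h2Kd]
        omega

omit [DecidableEq Q0] in
theorem bform_sub_left (E : Q0 → Q0 → ℤ) (x y z : Q0 → ℤ) :
    bform E (fun i => x i - y i) z = bform E x z - bform E y z := by
  unfold bform
  rw [← Finset.sum_sub_distrib]
  refine Finset.sum_congr rfl fun i _ => ?_
  rw [← Finset.sum_sub_distrib]
  exact Finset.sum_congr rfl fun j _ => by ring

omit [DecidableEq Q0] in
theorem nvec_zero : nvec (0 : Q0 → ℕ) = (0 : Q0 → ℤ) := rfl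

/-- Lemma A: valuation bound for nontrivial decompositions of `τ_n`. -/
theorem lemmaA (E : Q0 → Q0 → ℤ) (hdiag : ∀ i, E i i = 1)
    (hoff : ∀ i j, i ≠ j → E i j ≤ 0) (δ : Q0 → ℕ)
    (hδ : condStar (fun i j => E i j + E j i) δ) (d : Q0 → ℕ)
    (hsupp : ∀ i, d i ≠ 0 ∨ δ i ≠ 0) (J : ℤ) (hJ : 0 ≤ J) :
    ∃ N : ℕ, 1 ≤ N ∧ ∀ n : ℕ, N ≤ n → ∀ {ι : Type*} (s : Finset ι) (p : ι → Q0 → ℕ),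
      (∀ j, ∑ m ∈ s, p m j = d j + n * δ j) →
      ∀ m₁ ∈ s, ∀ m₂ ∈ s, m₁ ≠ m₂ → p m₁ ≠ 0 → p m₂ ≠ 0 →
      bform E (nvec fun j => d j + n * δ j) (nvec fun j => d j + n * δ j) + J ≤
        ∑ m ∈ s, bform E (nvec (p m)) (nvec (p m)) := by
  classical
  obtain ⟨N, hN1, hB⟩ := lemmaB E hdiag hoff δ hδ d hsupp (2 * J) (by omega)
  refine ⟨N, hN1, ?_⟩
  intro n hn ι s p hsum m₁ hm₁ m₂ hm₂ hne hp1 hp2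
  set τ : Q0 → ℕ := fun j => d j + n * δ j with hτ
  have hsum' : ∀ j, ∑ m ∈ s, p m j = τ j := hsum
  have hple : ∀ (m) (_ : m ∈ s) (j), p m j ≤ τ j := by
    intro m hm j
    rw [← hsum' j]
    exact Finset.single_le_sum (f := fun m => p m j) (fun _ _ => Nat.zero_le _) hm
  have hpairle : ∀ (a) (_ : a ∈ s) (b) (_ : b ∈ s) (_ : a ≠ b) (j),
      p a j + p b j ≤ τ j := by
    intro a ha b hb hab j
    rw [← hsum' j]
    have : ∑ m ∈ ({a, b} : Finset ι), p m j ≤ ∑ m ∈ s, p m j :=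
      Finset.sum_le_sum_of_subset (by
        intro z hz
        simp only [Finset.mem_insert, Finset.mem_singleton] at hz
        rcases hz with rfl | rfl <;> assumption)
    rwa [Finset.sum_pair hab] at this
  -- each piece with a partner gives a nonpositive pairing; the designated piece gives ≤ -2J
  have hpiece : ∀ (m) (_ : m ∈ s) (m') (_ : m' ∈ s) (_ : m ≠ m') (_ : p m ≠ 0) (_ : p m' ≠ 0),
      bform (fun i j => E i j + E j i) (nvec (p m)) (nvec fun j => τ j - p m j) ≤ -(2 * J) := by
    intro m hm m' hm' hmm' hpm hpm'
    apply hB n hn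
    · intro j
      have h1 := hple m hm j
      have ht : τ j = d j + n * δ j := rfl
      omega
    · exact hpm
    · obtain ⟨j₀, hj₀⟩ := Function.ne_iff.mp hpm'
      rw [Function.ne_iff]
      refine ⟨j₀, ?_⟩
      have h2 := hpairle m hm m' hm' hmm' j₀
      have h0 : (0 : Q0 → ℕ) j₀ = 0 := rfl
      have h0' : (0 : Q0 → ℕ) j₀ = 0 := rfl
      simp only [h0]
      omega
  -- the identity
  set C : Q0 → Q0 → ℤ := fun i j => E i j + E j i with hC
  have hτsub : ∀ m ∈ s, nvec (fun j => τ j - p m j) = fun j => nvec τ j - nvec (p m) j := by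
    intro m hm
    funext j
    have := hple m hm j
    simp only [nvec]
    omega
  have hid : ∑ m ∈ s, bform C (nvec (p m)) (nvec fun j => τ j - p m j)
      = 2 * bform E (nvec τ) (nvec τ) - 2 * ∑ m ∈ s, bform E (nvec (p m)) (nvec (p m)) := by
    have e1 : ∀ m ∈ s, bform C (nvec (p m)) (nvec fun j => τ j - p m j)
        = bform E (nvec (p m)) (nvec τ) + bform E (nvec τ) (nvec (p m))
          - 2 * bform E (nvec (p m)) (nvec (p m)) := by
      intro m hm
      rw [hτsub m hm, hC, bform_symm_eq, bform_sub_right, bform_sub_left]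
      ring
    rw [Finset.sum_congr rfl e1, Finset.sum_sub_distrib, Finset.sum_add_distrib]
    have e2 : ∑ m ∈ s, bform E (nvec (p m)) (nvec τ) = bform E (nvec τ) (nvec τ) := by
      rw [← bform_sum_left E s (fun m => nvec (p m)) (nvec τ)]
      congr 1
      funext j
      simp only [nvec]
      rw [← hsum' j, Nat.cast_sum]
    have e3 : ∑ m ∈ s, bform E (nvec τ) (nvec (p m)) = bform E (nvec τ) (nvec τ) := by
      rw [← bform_sum_right E s (nvec τ) (fun m => nvec (p m))]
      congr 1
      funext j
      simp only [nvec]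
      rw [← hsum' j, Nat.cast_sum]
    rw [e2, e3, ← Finset.mul_sum]
    ring
  have hsplit : ∑ m ∈ s, bform C (nvec (p m)) (nvec fun j => τ j - p m j) ≤ -(2 * J) := by
    rw [← Finset.add_sum_erase s _ hm₁]
    have h1 : bform C (nvec (p m₁)) (nvec fun j => τ j - p m₁ j) ≤ -(2 * J) :=
      hpiece m₁ hm₁ m₂ hm₂ hne hp1 hp2
    have h2 : ∑ m ∈ s.erase m₁, bform C (nvec (p m)) (nvec fun j => τ j - p m j) ≤ 0 := by
      refine Finset.sum_nonpos fun m hm => ?_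
      by_cases hz : p m = 0
      · rw [hz, nvec_zero, bform_zero_left]
      · have hmne : m ≠ m₁ := (Finset.mem_erase.mp hm).1
        exact le_trans (hpiece m (Finset.mem_of_mem_erase hm) m₁ hm₁ hmne hz hp1) (by omega)
    omega
  omega
end KS
end
end
section
noncomputable section
open Finset
namespace KS

open PowerSeries

/-- power-series level `φ_N` -/
def phiR (N : ℕ) : PowerSeries ℚ := ∏ j ∈ Finset.Icc 1 N, (1 - (X : PowerSeries ℚ) ^ j)

theorem phiL_eq (N : ℕ) : phiL N = ((phiR N : PowerSeries ℚ) : LaurentSeries ℚ) := by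
  rw [phiL, phiR]
  rw [map_prod (HahnSeries.ofPowerSeries ℤ ℚ)]
  refine Finset.prod_congr rfl fun j _ => ?_
  rw [map_sub, map_one, map_pow]
  rfl

theorem constCoeff_phiR (N : ℕ) : constantCoeff (phiR N) = 1 := by
  rw [phiR, map_prod]
  refine Finset.prod_eq_one fun j hj => ?_
  have hj1 : 1 ≤ j := (Finset.mem_Icc.mp hj).1
  rw [map_sub, map_one, map_pow, constantCoeff_X, zero_pow (by omega), sub_zero]

variable {Q0 : Type*} [Fintype Q0]

def phiVR (v : Q0 → ℕ) : PowerSeries ℚ := ∏ i, phiR (v i)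

theorem phiV_eq (v : Q0 → ℕ) : phiV v = ((phiVR v : PowerSeries ℚ) : LaurentSeries ℚ) := by
  rw [phiV, phiVR, map_prod (HahnSeries.ofPowerSeries ℤ ℚ)]
  exact Finset.prod_congr rfl fun i _ => phiL_eq (v i)

theorem constCoeff_phiVR (v : Q0 → ℕ) : constantCoeff (phiVR v) = 1 := by
  rw [phiVR, map_prod]
  exact Finset.prod_eq_one fun i _ => constCoeff_phiR (v i)

theorem phiV_zero : phiV (0 : Q0 → ℕ) = 1 := by
  rw [phiV]
  refine Finset.prod_eq_one fun i _ => ?_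
  have : phiL 0 = 1 := by rw [phiL]; simp
  simpa using this

/-- validity predicate for flags, matching the condition in `Kser`. -/
def ValidD (α : Q0 → ℕ) (D : ℕ → Q0 → ℕ) : Prop :=
  (∀ k i, D (k + 1) i ≤ D k i) ∧ (∃ s : ℕ, ∀ k, s ≤ k → D k = 0) ∧ (∀ i, ∑ᶠ k, D k i = α i)

theorem ValidD.antitone {α : Q0 → ℕ} {D : ℕ → Q0 → ℕ} (h : ValidD α D) :
    ∀ {k l : ℕ}, k ≤ l → ∀ i, D l i ≤ D k i := by
  intro k l hkl i
  induction l, hkl using Nat.le_induction with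
  | base => exact le_refl _
  | succ m hm ih => exact le_trans (h.1 m i) ih

theorem ValidD.sum_range {α : Q0 → ℕ} {D : ℕ → Q0 → ℕ} (h : ValidD α D) {B : ℕ}
    (hB : ∀ k, B ≤ k → D k = 0) (i : Q0) : ∑ k ∈ Finset.range B, D k i = α i := by
  rw [← h.2.2 i]
  exact (finsum_eq_sum_of_support_subset _ (by
    intro k hk
    simp only [Function.mem_support] at hk
    simp only [Finset.coe_range, Set.mem_Iio]
    by_contra hkB
    rw [hB k (by omega)] at hk
    exact hk rfl)).symm

theorem ValidD.le {α : Q0 → ℕ} {D : ℕ → Q0 → ℕ} (h : ValidD α D) (k : ℕ) (i : Q0) :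
    D k i ≤ α i := by
  obtain ⟨s, hs⟩ := h.2.1
  set B := max s (k + 1) with hBdef
  have hB : ∀ k', B ≤ k' → D k' = 0 := fun k' hk' => hs k' (by omega)
  rw [← h.sum_range hB i]
  exact Finset.single_le_sum (f := fun k => D k i) (fun _ _ => Nat.zero_le _)
    (Finset.mem_range.mpr (by omega))

theorem ValidD.zero_of_ge {α : Q0 → ℕ} {D : ℕ → Q0 → ℕ} (h : ValidD α D) (k : ℕ)
    (hk : ∑ i, α i ≤ k) : D k = 0 := by
  by_contra hne
  obtain ⟨i₀, hi₀⟩ := Function.ne_iff.mp hne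
  have hi₀' : 1 ≤ D k i₀ := by
    have : (0 : Q0 → ℕ) i₀ = 0 := rfl
    omega
  obtain ⟨s, hs⟩ := h.2.1
  set B := max s (k + 1) with hBdef
  have hB : ∀ k', B ≤ k' → D k' = 0 := fun k' hk' => hs k' (by omega)
  have htot : ∑ i, α i = ∑ k' ∈ Finset.range B, ∑ i, D k' i := by
    rw [Finset.sum_comm]
    exact Finset.sum_congr rfl fun i _ => (h.sum_range hB i).symm
  have hge : ∀ k' ∈ Finset.range (k + 1), 1 ≤ ∑ i, D k' i := by
    intro k' hk'
    have h1 : D k i₀ ≤ D k' i₀ := h.antitone (by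
      simp only [Finset.mem_range] at hk'; omega) i₀
    calc 1 ≤ D k' i₀ := by omega
      _ ≤ ∑ i, D k' i := Finset.single_le_sum (fun _ _ => Nat.zero_le _) (mem_univ i₀)
  have h2 : k + 1 ≤ ∑ k' ∈ Finset.range (k + 1), ∑ i, D k' i := by
    calc k + 1 = ∑ _k' ∈ Finset.range (k + 1), 1 := by simp
      _ ≤ _ := Finset.sum_le_sum hge
  have h3 : ∑ k' ∈ Finset.range (k + 1), ∑ i, D k' i ≤ ∑ k' ∈ Finset.range B, ∑ i, D k' i :=
    Finset.sum_le_sum_of_subset (Finset.range_subset_range.mpr (by omega))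
  omega

theorem validD_finite (α : Q0 → ℕ) : {D : ℕ → Q0 → ℕ | ValidD α D}.Finite := by
  classical
  set B := ∑ i, α i with hB
  rw [← Set.finite_coe_iff]
  refine Finite.of_injective
    (f := fun (D : {D : ℕ → Q0 → ℕ | ValidD α D}) (k : Fin B) (i : Q0) =>
      (⟨D.1 k i, Nat.lt_succ_of_le (D.2.le k i)⟩ : Fin (α i + 1))) ?_
  intro D₁ D₂ hD
  ext k i
  by_cases hk : k < B
  · have := congrFun (congrFun hD ⟨k, hk⟩) i
    simpa using this
  · rw [D₁.2.zero_of_ge k (by omega), D₂.2.zero_of_ge k (by omega)]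

/-- the trivial one-step flag -/
def trivFlag (α : Q0 → ℕ) : ℕ → Q0 → ℕ := fun k => if k = 0 then α else 0

theorem validD_trivFlag (α : Q0 → ℕ) : ValidD α (trivFlag α) := by
  refine ⟨?_, ⟨1, ?_⟩, ?_⟩
  · intro k i
    simp [trivFlag]
  · intro k hk
    have : k ≠ 0 := by omega
    simp [trivFlag, this]
  · intro i
    rw [finsum_eq_single (fun k => trivFlag α k i) 0 ?_]
    · simp [trivFlag]
    · intro k hk
      simp [trivFlag, hk]

theorem ValidD.eq_trivFlag {α : Q0 → ℕ} {D : ℕ → Q0 → ℕ} (h : ValidD α D) (h1 : D 1 = 0) :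
    D = trivFlag α := by
  have hz : ∀ k, 1 ≤ k → D k = 0 := by
    intro k hk
    ext i
    have := h.antitone hk i
    rw [h1] at this
    simpa using Nat.le_zero.mp this
  funext k
  rcases Nat.eq_zero_or_pos k with rfl | hk
  · have : ∀ i, D 0 i = α i := by
      intro i
      rw [← h.2.2 i, finsum_eq_single (fun k => D k i) 0 ?_]
      intro k hk
      show D k i = 0
      rw [hz k (by omega)]
      rfl
    funext i
    simp [trivFlag, this i]
  · rw [hz k hk]
    have : k ≠ 0 := by omega
    simp [trivFlag, this]

end KS
end
end
section
noncomputable section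
open Finset
namespace KS
open PowerSeries

variable {Q0 : Type*} [Fintype Q0]

/-- the valuation (exponent) of a flag term -/
def kval (E : Q0 → Q0 → ℤ) (D : ℕ → Q0 → ℕ) : ℤ :=
  ∑ᶠ k : ℕ, bform E (nvec (D k)) (nvec (D k))

/-- the term of the flag `D` in `Kser` -/
def kterm (E : Q0 → Q0 → ℤ) (D : ℕ → Q0 → ℕ) : LaurentSeries ℚ :=
  tls ^ (kval E D) / ∏ᶠ k : ℕ, phiV (fun i => D k i - D (k + 1) i)

theorem nvec_zero' : nvec (0 : Q0 → ℕ) = (0 : Q0 → ℤ) := rfl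

open Classical in
theorem Kser_eq (E : Q0 → Q0 → ℤ) (α : Q0 → ℕ) :
    Kser E α = ∑ᶠ D : ℕ → Q0 → ℕ, if ValidD α D then kterm E D else 0 := by
  unfold Kser kterm kval ValidD
  exact finsum_congr fun D => by congr

theorem kval_eq_sum (E : Q0 → Q0 → ℤ) {D : ℕ → Q0 → ℕ} {B : ℕ}
    (hB : ∀ k, B ≤ k → D k = 0) :
    kval E D = ∑ k ∈ Finset.range B, bform E (nvec (D k)) (nvec (D k)) := by
  refine finsum_eq_sum_of_support_subset _ ?_
  intro k hk
  simp only [Function.mem_support] at hk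
  simp only [Finset.coe_range, Set.mem_Iio]
  by_contra hkB
  rw [hB k (by omega), nvec_zero', bform_zero_left] at hk
  exact hk rfl

theorem layer_zero {D : ℕ → Q0 → ℕ} {k : ℕ} (h1 : D k = 0) (h2 : D (k + 1) = 0) :
    (fun i => D k i - D (k + 1) i) = (0 : Q0 → ℕ) := by
  funext i
  rw [h1, h2]
  rfl

theorem kterm_val (E : Q0 → Q0 → ℤ) {α : Q0 → ℕ} {D : ℕ → Q0 → ℕ} (h : ValidD α D) :
    Val (kval E D) (kterm E D) := by
  obtain ⟨s, hs⟩ := h.2.1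
  set u : PowerSeries ℚ := ∏ k ∈ Finset.range s, phiVR (fun i => D k i - D (k + 1) i) with hu
  have hprod : (∏ᶠ k : ℕ, phiV (fun i => D k i - D (k + 1) i)) =
      ((u : PowerSeries ℚ) : LaurentSeries ℚ) := by
    rw [hu, map_prod (HahnSeries.ofPowerSeries ℤ ℚ)]
    refine (finprod_eq_prod_of_mulSupport_subset _ ?_).trans
      (Finset.prod_congr rfl fun k _ => phiV_eq _)
    intro k hk
    simp only [Function.mem_mulSupport] at hk
    simp only [Finset.coe_range, Set.mem_Iio]
    by_contra hks
    rw [layer_zero (hs k (by omega)) (hs (k + 1) (by omega)), phiV_zero] at hk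
    exact hk rfl
  have hcc : constantCoeff u ≠ 0 := by
    rw [hu, map_prod]
    rw [Finset.prod_eq_one fun k _ => constCoeff_phiVR _]
    norm_num
  refine ⟨u⁻¹, ?_⟩
  rw [kterm, hprod, div_eq_mul_inv, Val.coe_inv u hcc]

theorem Kser_val (E : Q0 → Q0 → ℤ) (α : Q0 → ℕ) (J : ℤ)
    (hJ : ∀ D, ValidD α D → J ≤ kval E D) : Val J (Kser E α) := by
  rw [Kser_eq]
  refine Val.finsum _ fun D => ?_
  split_ifs with h
  · exact Val.mono (hJ D h) (kterm_val E h)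
  · exact Val.zero J

theorem kterm_trivFlag (E : Q0 → Q0 → ℤ) (α : Q0 → ℕ) :
    kterm E (trivFlag α) = tls ^ (bform E (nvec α) (nvec α)) * (phiV α)⁻¹ := by
  have h1 : kval E (trivFlag α) = bform E (nvec α) (nvec α) := by
    rw [kval, finsum_eq_single _ 0 ?_]
    · rfl
    · intro k hk
      show bform E (nvec (trivFlag α k)) (nvec (trivFlag α k)) = 0
      have : trivFlag α k = 0 := by simp [trivFlag, hk]
      rw [this, nvec_zero', bform_zero_left]
  have h2 : (∏ᶠ k : ℕ, phiV (fun i => trivFlag α k i - trivFlag α (k + 1) i)) = phiV α := by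
    rw [finprod_eq_single _ 0 ?_]
    · have : (fun i => trivFlag α 0 i - trivFlag α 1 i) = α := by
        funext i
        simp [trivFlag]
    
      rw [this]
    · intro k hk
      have e1 : trivFlag α k = 0 := by simp [trivFlag, hk]
      have e2 : trivFlag α (k + 1) = 0 := by simp [trivFlag]
      rw [layer_zero e1 e2, phiV_zero]
  rw [kterm, h1, h2, div_eq_mul_inv]

theorem Kser_decomp (E : Q0 → Q0 → ℤ) (α : Q0 → ℕ) (J : ℤ)
    (hJ : ∀ D, ValidD α D → D ≠ trivFlag α → J ≤ kval E D) :
    ∃ Rst : LaurentSeries ℚ, Val J Rst ∧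
      Kser E α = tls ^ (bform E (nvec α) (nvec α)) * (phiV α)⁻¹ + Rst := by
  classical
  set Fs := (validD_finite α).toFinset with hFs
  have hsupp : (Function.support fun D => if ValidD α D then kterm E D else 0) ⊆ ↑Fs := by
    intro D hD
    simp only [Function.mem_support] at hD
    by_cases h : ValidD α D
    · simp only [hFs, Set.Finite.coe_toFinset, Set.mem_setOf_eq]
      exact h
    · rw [if_neg h] at hD
      exact absurd rfl hD
  have htriv : trivFlag α ∈ Fs := by
    simp only [hFs, Set.Finite.mem_toFinset, Set.mem_setOf_eq]
    exact validD_trivFlag α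
  rw [Kser_eq, finsum_eq_sum_of_support_subset _ hsupp,
    ← Finset.add_sum_erase Fs _ htriv]
  refine ⟨∑ D ∈ Fs.erase (trivFlag α), if ValidD α D then kterm E D else 0, ?_, ?_⟩
  · refine Val.sum _ _ fun D hD => ?_
    have hDv : ValidD α D := by
      have := Finset.mem_of_mem_erase hD
      simpa only [hFs, Set.Finite.mem_toFinset, Set.mem_setOf_eq] using this
    have hDne : D ≠ trivFlag α := (Finset.mem_erase.mp hD).1
    rw [if_pos hDv]
    exact Val.mono (hJ D hDv hDne) (kterm_val E hDv)
  · rw [if_pos (validD_trivFlag α), kterm_trivFlag]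

theorem exists_min_flag (E : Q0 → Q0 → ℤ) (α : Q0 → ℕ) :
    ∃ D₀, ValidD α D₀ ∧ ∀ D, ValidD α D → kval E D₀ ≤ kval E D := by
  classical
  set Fs := (validD_finite α).toFinset with hFs
  have hne : Fs.Nonempty := ⟨trivFlag α, by
    simp only [hFs, Set.Finite.mem_toFinset, Set.mem_setOf_eq]; exact validD_trivFlag α⟩
  have hne' : (Fs.image (kval E)).Nonempty := hne.image _
  obtain ⟨D₀, hD₀m, hD₀v⟩ := Finset.mem_image.mp (Finset.min'_mem _ hne')
  refine ⟨D₀, by simpa only [hFs, Set.Finite.mem_toFinset, Set.mem_setOf_eq] using hD₀m, ?_⟩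
  intro D hD
  rw [hD₀v]
  exact Finset.min'_le _ _ (Finset.mem_image_of_mem _ (by
    simp only [hFs, Set.Finite.mem_toFinset, Set.mem_setOf_eq]; exact hD))

end KS
end
end
section
noncomputable section
open Finset
namespace KS
open PowerSeries

variable {Q0 : Type*} [Fintype Q0]

theorem Val.prod {ι : Type*} (s : Finset ι) (f : ι → LaurentSeries ℚ) (m : ι → ℤ)
    (h : ∀ k ∈ s, Val (m k) (f k)) : Val (∑ k ∈ s, m k) (∏ k ∈ s, f k) := by
  classical
  induction s using Finset.cons_induction with
  | empty => simpa using Val.coe 1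
  | cons a s ha ih =>
    rw [Finset.sum_cons, Finset.prod_cons]
    exact (h a (Finset.mem_cons_self a s)).mul
      (ih fun k hk => h k (Finset.mem_cons_of_mem hk))

open Classical in
theorem huaInner_eq (E : Q0 → Q0 → ℤ) (τ : Q0 → ℕ) (l : ℕ) :
    huaInner E τ l = ∑ᶠ A : Fin l → Q0 → ℕ,
      if (∀ k, A k ≠ 0) ∧ (∀ i, ∑ k, A k i = τ i) then ∏ k, Kser E (A k) else 0 := rfl

theorem huaInner_one (E : Q0 → Q0 → ℤ) (τ : Q0 → ℕ) (hτ : τ ≠ 0) :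
    huaInner E τ 1 = Kser E τ := by
  classical
  rw [huaInner_eq, finsum_eq_single _ (fun _ : Fin 1 => τ)]
  · rw [if_pos ⟨fun _ => hτ, fun i => by simp⟩]
    simp
  · intro A hA
    rw [if_neg]
    rintro ⟨h1, h2⟩
    apply hA
    funext k i
    have hk : k = 0 := Subsingleton.elim _ _
    subst hk
    have := h2 i
    simpa using this

theorem huaInner_val (E : Q0 → Q0 → ℤ) (τ : Q0 → ℕ) (l : ℕ) (hl : 2 ≤ l) (J : ℤ)
    (hA : ∀ (s : Finset (Fin l × ℕ)) (p : Fin l × ℕ → Q0 → ℕ),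
      (∀ j, ∑ m ∈ s, p m j = τ j) →
      ∀ m₁ ∈ s, ∀ m₂ ∈ s, m₁ ≠ m₂ → p m₁ ≠ 0 → p m₂ ≠ 0 →
      J ≤ ∑ m ∈ s, bform E (nvec (p m)) (nvec (p m))) :
    Val J (huaInner E τ l) := by
  classical
  rw [huaInner_eq]
  refine Val.finsum _ fun A => ?_
  split_ifs with hcond
  swap
  · exact Val.zero J
  obtain ⟨hAnz, hAsum⟩ := hcond
  choose D hval hmin using fun k => exists_min_flag E (A k)
  set B := ∑ i, τ i with hB
  have hAle : ∀ k i, A k i ≤ τ i := by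
    intro k i
    rw [← hAsum i]
    exact Finset.single_le_sum (f := fun k => A k i) (fun _ _ => Nat.zero_le _) (mem_univ k)
  have hzero : ∀ k m, B ≤ m → D k m = 0 := by
    intro k m hm
    refine (hval k).zero_of_ge m ?_
    calc ∑ i, A k i ≤ ∑ i, τ i := Finset.sum_le_sum fun i _ => hAle k i
      _ ≤ m := hm
  have hsump : ∀ j, ∑ km ∈ (univ : Finset (Fin l)) ×ˢ Finset.range B, D km.1 km.2 j = τ j := by
    intro j
    rw [Finset.sum_product]
    rw [← hAsum j]
    exact Finset.sum_congr rfl fun k _ => (hval k).sum_range (hzero k) j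
  -- two distinct nonzero pieces
  have hpiece : ∀ k : Fin l, ∃ m, m ∈ Finset.range B ∧ D k m ≠ 0 := by
    intro k
    obtain ⟨j, hj⟩ := Function.ne_iff.mp (hAnz k)
    have hj' : A k j ≠ 0 := hj
    have hsum := (hval k).sum_range (hzero k) j
    by_contra hcon
    push_neg at hcon
    have : ∑ m ∈ Finset.range B, D k m j = 0 := by
      refine Finset.sum_eq_zero fun m hm => ?_
      rw [hcon m hm]
      rfl
    rw [hsum] at this
    exact hj' this
  have h0l : (0 : ℕ) < l := by omega
  have h1l : (1 : ℕ) < l := by omega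
  obtain ⟨m₀, hm₀, hDm₀⟩ := hpiece ⟨0, h0l⟩
  obtain ⟨m₁, hm₁, hDm₁⟩ := hpiece ⟨1, h1l⟩
  have hJle : J ≤ ∑ km ∈ (univ : Finset (Fin l)) ×ˢ Finset.range B,
      bform E (nvec (D km.1 km.2)) (nvec (D km.1 km.2)) := by
    refine hA _ _ hsump (⟨0, h0l⟩, m₀) ?_ (⟨1, h1l⟩, m₁) ?_ ?_ hDm₀ hDm₁
    · exact Finset.mem_product.mpr ⟨mem_univ _, hm₀⟩
    · exact Finset.mem_product.mpr ⟨mem_univ _, hm₁⟩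
    · intro hcontra
      have := congrArg Prod.fst hcontra
      simp only at this
      exact absurd (congrArg Fin.val this) (by norm_num)
  have hkv : ∑ km ∈ (univ : Finset (Fin l)) ×ˢ Finset.range B,
      bform E (nvec (D km.1 km.2)) (nvec (D km.1 km.2)) = ∑ k, kval E (D k) := by
    rw [Finset.sum_product]
    exact Finset.sum_congr rfl fun k _ => (kval_eq_sum E (hzero k)).symm
  refine Val.mono ?_ (Val.prod univ (fun k => Kser E (A k)) (fun k => kval E (D k))
    fun k _ => Kser_val E (A k) _ fun D' hD' => hmin k D' hD')
  rw [hkv] at hJle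
  exact hJle

theorem Val.scalar (l : ℕ) (hl : 1 ≤ l) :
    Val 0 (((-1 : LaurentSeries ℚ) ^ (l + 1) / (l : LaurentSeries ℚ))) := by
  have h1 : ((-1 : LaurentSeries ℚ) ^ (l + 1)) =
      (((((-1 : PowerSeries ℚ)) ^ (l + 1) : PowerSeries ℚ)) : LaurentSeries ℚ) := by
    rw [map_pow, map_neg, map_one]
  have h2 : ((l : LaurentSeries ℚ)) = (((l : PowerSeries ℚ)) : LaurentSeries ℚ) := by
    rw [map_natCast]
  have h3 : constantCoeff ((l : PowerSeries ℚ)) ≠ 0 := by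
    rw [map_natCast]
    exact_mod_cast Nat.one_le_iff_ne_zero.mp hl
  rw [div_eq_mul_inv, h1, h2, Val.coe_inv _ h3]
  have h4 := (Val.coe ((-1 : PowerSeries ℚ) ^ (l + 1))).mul
    (Val.coe (((l : PowerSeries ℚ))⁻¹))
  simpa using h4

end KS
end
end
section
noncomputable section
open Finset
namespace KS
open PowerSeries
open scoped Classical

variable {α : Type*}

/-- ported from Archive/Wiedijk100Theorems/Partition.lean -/
def indicatorSeries (α : Type*) [Semiring α] (s : Set ℕ) : PowerSeries α :=
  PowerSeries.mk fun n => if n ∈ s then 1 else 0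

theorem coeff_indicator (s : Set ℕ) [Semiring α] (n : ℕ) :
    coeff n (indicatorSeries α s) = if n ∈ s then 1 else 0 :=
  coeff_mk _ _

theorem constantCoeff_indicator (s : Set ℕ) [Semiring α] :
    constantCoeff (indicatorSeries α s) = if 0 ∈ s then 1 else 0 :=
  rfl

theorem num_series' [Field α] (i : ℕ) :
    (1 - (X : PowerSeries α) ^ (i + 1))⁻¹ = indicatorSeries α {k | i + 1 ∣ k} := by
  rw [PowerSeries.inv_eq_iff_mul_eq_one]
  · ext n
    cases n with
    | zero => simp [mul_sub, zero_pow, constantCoeff_indicator]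
    | succ n =>
      simp only [coeff_one, if_false, mul_sub, mul_one, coeff_indicator,
        LinearMap.map_sub, reduceCtorEq]
      simp_rw [coeff_mul, coeff_X_pow, coeff_indicator, @boole_mul _ _ _ _]
      erw [@sum_ite _ _ _ _ _ (fun _ => Classical.propDecidable _), sum_ite]
      simp_rw [@filter_filter _ _ _ _ _, sum_const_zero, add_zero, sum_const, nsmul_eq_mul, mul_one,
        sub_eq_iff_eq_add, zero_add]
      symm
      split_ifs with h
      · suffices #{a ∈ antidiagonal (n + 1) | i + 1 ∣ a.fst ∧ a.snd = i + 1} = 1 by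
          simp only [Set.mem_setOf_eq]; convert congr_arg ((↑) : ℕ → α) this; norm_cast
        rw [card_eq_one]
        cases' h with p hp
        refine ⟨((i + 1) * (p - 1), i + 1), ?_⟩
        ext ⟨a₁, a₂⟩
        simp only [mem_filter, Prod.mk_inj, HasAntidiagonal.mem_antidiagonal, mem_singleton]
        constructor
        · rintro ⟨a_left, ⟨a, rfl⟩, rfl⟩
          refine ⟨?_, rfl⟩
          rw [Nat.mul_sub_left_distrib, ← hp, ← a_left, mul_one, Nat.add_sub_cancel]
        · rintro ⟨rfl, rfl⟩
          match p with
          | 0 => rw [mul_zero] at hp; cases hp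
          | p + 1 => rw [hp]; simp [mul_add]
      · suffices #{a ∈ antidiagonal (n + 1) | i + 1 ∣ a.fst ∧ a.snd = i + 1} = 0 by
          simp only [Set.mem_setOf_eq]; convert congr_arg ((↑) : ℕ → α) this; norm_cast
        rw [card_eq_zero]
        apply eq_empty_of_forall_notMem
        simp only [Prod.forall, mem_filter, not_and, HasAntidiagonal.mem_antidiagonal]
        rintro _ h₁ h₂ ⟨a, rfl⟩ rfl
        apply h
        simp [← h₂]
  · simp [zero_pow]

-- The main workhorse of the partition theorem proof (ported verbatim).
theorem partialGF_prop (α : Type*) [CommSemiring α] (n : ℕ) (s : Finset ℕ) (hs : ∀ i ∈ s, 0 < i)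
    (c : ℕ → Set ℕ) (hc : ∀ i, i ∉ s → 0 ∈ c i) :
    #{p : n.Partition | (∀ j, p.parts.count j ∈ c j) ∧ ∀ j ∈ p.parts, j ∈ s} =
      coeff n (∏ i ∈ s, indicatorSeries α ((· * i) '' c i)) := by
  simp_rw [coeff_prod, coeff_indicator, prod_boole, sum_boole]
  apply congr_arg
  simp only [mem_univ, forall_true_left, not_and, not_forall, exists_prop,
    Set.mem_image, not_exists]
  set φ : (a : Nat.Partition n) →
    a ∈ filter (fun p ↦ (∀ (j : ℕ), Multiset.count j p.parts ∈ c j) ∧ ∀ j ∈ p.parts, j ∈ s) univ →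
    ℕ →₀ ℕ := fun p _ => {
      toFun := fun i => Multiset.count i p.parts • i
      support := Finset.filter (fun i => i ≠ 0) p.parts.toFinset
      mem_support_toFun := fun a => by
        simp only [smul_eq_mul, ne_eq, mul_eq_zero, Multiset.count_eq_zero]
        rw [not_or, not_not]
        simp only [Multiset.mem_toFinset, not_not, mem_filter] }
  refine Finset.card_bij φ ?_ ?_ ?_
  · intro a ha
    simp only [φ, not_forall, not_exists, not_and, exists_prop, mem_filter]
    rw [mem_finsuppAntidiag]
    dsimp only [ne_eq, smul_eq_mul, id_eq, eq_mpr_eq_cast, le_eq_subset, Finsupp.coe_mk]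
    simp only [mem_univ, forall_true_left, not_and, not_forall, exists_prop,
      mem_filter, true_and] at ha
    refine ⟨⟨?_, fun i ↦ ?_⟩, fun i _ ↦ ⟨a.parts.count i, ha.1 i, rfl⟩⟩
    · conv_rhs => simp [← a.parts_sum]
      rw [sum_multiset_count_of_subset _ s]
      · simp only [smul_eq_mul]
      · intro i
        simp only [Multiset.mem_toFinset, not_not, mem_filter]
        apply ha.2
    · simp only [ne_eq, Multiset.mem_toFinset, not_not, mem_filter, and_imp]
      exact fun hi _ ↦ ha.2 i hi
  · intro p₁ hp₁ p₂ hp₂ h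
    apply Nat.Partition.ext
    simp only [true_and, mem_univ, mem_filter] at hp₁ hp₂
    ext i
    simp only [φ, ne_eq, Multiset.mem_toFinset, not_not, smul_eq_mul, Finsupp.mk.injEq] at h
    by_cases hi : i = 0
    · rw [hi]
      rw [Multiset.count_eq_zero_of_notMem]
      · rw [Multiset.count_eq_zero_of_notMem]
        intro a; exact Nat.lt_irrefl 0 (hs 0 (hp₂.2 0 a))
      intro a; exact Nat.lt_irrefl 0 (hs 0 (hp₁.2 0 a))
    · rw [← mul_left_inj' hi]
      rw [funext_iff] at h
      exact h.2 i
  · simp only [φ, mem_filter, mem_finsuppAntidiag, mem_univ, exists_prop, true_and, and_assoc]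
    rintro f ⟨hf, hf₃, hf₄⟩
    have hf' : f ∈ finsuppAntidiag s n := mem_finsuppAntidiag.mpr ⟨hf, hf₃⟩
    simp only [mem_finsuppAntidiag] at hf'
    refine ⟨⟨∑ i ∈ s, Multiset.replicate (f i / i) i, ?_, ?_⟩, ?_, ?_, ?_⟩
    · intro i hi
      simp only [exists_prop, Multiset.mem_sum, mem_map, Function.Embedding.coeFn_mk] at hi
      rcases hi with ⟨t, ht, z⟩
      apply hs
      rwa [Multiset.eq_of_mem_replicate z]
    · simp_rw [Multiset.sum_sum, Multiset.sum_replicate, Nat.nsmul_eq_mul]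
      rw [← hf'.1]
      refine sum_congr rfl fun i hi => Nat.div_mul_cancel ?_
      rcases hf₄ i hi with ⟨w, _, hw₂⟩
      rw [← hw₂]
      exact dvd_mul_left _ _
    · intro i
      simp_rw [Multiset.count_sum', Multiset.count_replicate, sum_ite_eq']
      split_ifs with h
      · rcases hf₄ i h with ⟨w, hw₁, hw₂⟩
        rwa [← hw₂, Nat.mul_div_cancel _ (hs i h)]
      · exact hc _ h
    · intro i hi
      rw [Multiset.mem_sum] at hi
      rcases hi with ⟨j, hj₁, hj₂⟩
      rwa [Multiset.eq_of_mem_replicate hj₂]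
    · ext i
      simp_rw [Multiset.count_sum', Multiset.count_replicate, sum_ite_eq']
      simp only [ne_eq, Multiset.mem_toFinset, not_not, smul_eq_mul, ite_mul,
        zero_mul, Finsupp.coe_mk]
      split_ifs with h
      · apply Nat.div_mul_cancel
        rcases hf₄ i h with ⟨w, _, hw₂⟩
        apply Dvd.intro_left _ hw₂
      · apply symm
        rw [← Finsupp.notMem_support_iff]
        exact notMem_mono hf'.2 h

/-- `∏_{i=1}^N (1-X^i)⁻¹` at the power series level -/
def prodInvR (N : ℕ) : PowerSeries ℚ := ∏ i ∈ Finset.Icc 1 N, (1 - (X : PowerSeries ℚ) ^ i)⁻¹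

theorem coeff_prodInvR {n N : ℕ} (h : n ≤ N) :
    coeff n (prodInvR N) = Nat.card (Nat.Partition n) := by
  have hprop := partialGF_prop ℚ n (Finset.Icc 1 N)
    (fun i hi => (Finset.mem_Icc.mp hi).1) (fun _ => Set.univ) (fun _ _ => trivial)
  have hall : {p : n.Partition | (∀ j, p.parts.count j ∈ (Set.univ : Set ℕ)) ∧
      ∀ j ∈ p.parts, j ∈ Finset.Icc 1 N} = Set.univ := by
    ext p
    refine ⟨fun _ => trivial, fun _ => ⟨fun j => trivial, fun j hj => ?_⟩⟩
    rw [Finset.mem_Icc]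
    constructor
    · exact p.parts_pos hj
    · have hle : j ≤ p.parts.sum :=
        Multiset.single_le_sum (fun _ _ => Nat.zero_le _) j hj
      rw [p.parts_sum] at hle
      omega
  have heq : (∏ i ∈ Finset.Icc 1 N, indicatorSeries ℚ ((· * i) '' Set.univ)) = prodInvR N := by
    rw [prodInvR]
    refine Finset.prod_congr rfl fun i hi => ?_
    have hi1 : 1 ≤ i := (Finset.mem_Icc.mp hi).1
    obtain ⟨i', rfl⟩ : ∃ i', i = i' + 1 := ⟨i - 1, by omega⟩
    have hset : ((· * (i' + 1)) '' Set.univ) = {k | i' + 1 ∣ k} := by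
      ext k
      constructor
      · rintro ⟨a, -, rfl⟩
        exact Dvd.intro_left a rfl
      · rintro ⟨a, rfl⟩
        exact ⟨a, trivial, mul_comm _ _⟩
    rw [hset, num_series']
  rw [← heq, ← hprop]
  have hcard : #(Finset.univ.filter fun p : n.Partition =>
      (∀ j, p.parts.count j ∈ (Set.univ : Set ℕ)) ∧ ∀ j ∈ p.parts, j ∈ Finset.Icc 1 N) =
      Nat.card (n.Partition) := by
    rw [Nat.card_eq_fintype_card]
    rw [← Finset.card_univ]
    congr 1
    rw [Finset.eq_univ_iff_forall]
    intro p
    rw [Finset.mem_filter]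
    have := hall.ge (Set.mem_univ p)
    exact ⟨Finset.mem_univ p, this⟩
  rw [← hcard]

theorem prodInvR_mul_phiR (N : ℕ) : prodInvR N * phiR N = 1 := by
  rw [prodInvR, phiR, ← Finset.prod_mul_distrib]
  refine Finset.prod_eq_one fun i hi => ?_
  have hi1 : 1 ≤ i := (Finset.mem_Icc.mp hi).1
  refine PowerSeries.inv_mul_cancel _ ?_
  rw [map_sub, map_one, map_pow, constantCoeff_X, zero_pow (by omega), sub_zero]
  norm_num

theorem phiL_inv_eq (N : ℕ) :
    (phiL N)⁻¹ = ((prodInvR N : PowerSeries ℚ) : LaurentSeries ℚ) := by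
  rw [phiL_eq]
  refine inv_eq_of_mul_eq_one_left ?_
  rw [← PowerSeries.coe_mul, prodInvR_mul_phiR, PowerSeries.coe_one]

theorem Val.coe_of_coeff_zero (p : PowerSeries ℚ) (M : ℕ)
    (h : ∀ m, m < M → coeff m p = 0) : Val (M : ℤ) ((p : PowerSeries ℚ) : LaurentSeries ℚ) := by
  obtain ⟨q, hq⟩ := PowerSeries.X_pow_dvd_iff.mpr h
  refine ⟨q, ?_⟩
  rw [hq, PowerSeries.coe_mul, map_pow]
  have hX : (HahnSeries.ofPowerSeries ℤ ℚ) X = tls := rfl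
  rw [hX, ← zpow_natCast tls M]

theorem partGFL_eq : partGFL =
    (((PowerSeries.mk fun m => (Nat.card (Nat.Partition m) : ℚ)) : PowerSeries ℚ) :
      LaurentSeries ℚ) := rfl

theorem Val_phiLinv_sub_partGFL (N M : ℕ) (h : M ≤ N + 1) :
    Val (M : ℤ) ((phiL N)⁻¹ - partGFL) := by
  rw [phiL_inv_eq, partGFL_eq, ← PowerSeries.coe_sub]
  refine Val.coe_of_coeff_zero _ M fun m hm => ?_
  rw [map_sub, coeff_prodInvR (by omega), coeff_mk]
  ring

end KS
end
end
section
noncomputable section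
open Finset
namespace KS
open PowerSeries

theorem Val.neg {j : ℤ} {f : LaurentSeries ℚ} (h : Val j f) : Val j (-f) := by
  obtain ⟨p, rfl⟩ := h
  exact ⟨-p, by rw [map_neg]; ring⟩

theorem Val.sub {j : ℤ} {f g : LaurentSeries ℚ} (hf : Val j f) (hg : Val j g) :
    Val j (f - g) := by
  rw [sub_eq_add_neg]
  exact hf.add hg.neg

theorem Val.cast {a b : ℤ} {f : LaurentSeries ℚ} (h : Val a f) (hab : a = b) : Val b f :=
  hab ▸ h

theorem Val.prod_sub {ι : Type*} (s : Finset ι) (f g : ι → LaurentSeries ℚ) (J : ℤ)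
    (hf : ∀ k ∈ s, Val 0 (f k)) (hg : ∀ k ∈ s, Val 0 (g k))
    (hfg : ∀ k ∈ s, Val J (f k - g k)) :
    Val J ((∏ k ∈ s, f k) - ∏ k ∈ s, g k) := by
  classical
  induction s using Finset.cons_induction with
  | empty => simpa using Val.zero J
  | cons a s ha ih =>
    rw [Finset.prod_cons, Finset.prod_cons]
    have key : f a * ∏ k ∈ s, f k - g a * ∏ k ∈ s, g k =
        f a * ((∏ k ∈ s, f k) - ∏ k ∈ s, g k) + (f a - g a) * ∏ k ∈ s, g k := by ring
    rw [key]
    have h1 : Val J (f a * ((∏ k ∈ s, f k) - ∏ k ∈ s, g k)) :=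
      ((hf a (Finset.mem_cons_self a s)).mul
        (ih (fun k hk => hf k (Finset.mem_cons_of_mem hk))
            (fun k hk => hg k (Finset.mem_cons_of_mem hk))
            (fun k hk => hfg k (Finset.mem_cons_of_mem hk)))).cast (by ring)
    have h2 : Val J ((f a - g a) * ∏ k ∈ s, g k) :=
      ((hfg a (Finset.mem_cons_self a s)).mul
        (Val.prod s g (fun _ => 0) fun k hk => hg k (Finset.mem_cons_of_mem hk))).cast
        (by simp)
    exact h1.add h2

theorem Val_one_sub_tls : Val 0 (1 - tls) := by
  have : (1 : LaurentSeries ℚ) - tls = ((1 - X : PowerSeries ℚ) : LaurentSeries ℚ) := by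
    rw [PowerSeries.coe_sub, PowerSeries.coe_one]
    rfl
  rw [this]
  exact Val.coe _

theorem Val_tls_zpow (q : ℤ) : Val q (tls ^ q) :=
  ⟨1, by rw [PowerSeries.coe_one, mul_one]⟩

end KS

open KS in
theorem hua_coeff_stabilizes'
    {Q0 : Type*} [Fintype Q0] [DecidableEq Q0] [Nonempty Q0]
    (E : Q0 → Q0 → ℤ) (hdiag : ∀ i, E i i = 1) (hoff : ∀ i j, i ≠ j → E i j ≤ 0)
    (δ : Q0 → ℕ) (hδ : condStar (fun i j => E i j + E j i) δ)
    (d : Q0 → ℕ) (hsupp : ∀ i, d i ≠ 0 ∨ δ i ≠ 0) :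
    ∀ i : ℕ, ∃ N : ℕ, ∀ n ≥ N,
      (Gser E fun j => d j + n * δ j).coeff (i : ℤ) =
        ((1 - tls) * partGFL ^ (Finset.univ.filter fun j => δ j ≠ 0).card *
            ∏ j ∈ Finset.univ.filter (fun j => δ j = 0), (phiL (d j))⁻¹).coeff (i : ℤ) := by
  classical
  intro i
  obtain ⟨N₀, hN₀1, hA⟩ := lemmaA E hdiag hoff δ hδ d hsupp (i + 1 : ℤ) (by positivity)
  refine ⟨N₀ + i + 2, ?_⟩
  intro n hn
  have hnN₀ : N₀ ≤ n := by omega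
  have hn2 : 2 ≤ n := by omega
  have hni : i + 2 ≤ n := by omega
  obtain ⟨jδ, hjδ⟩ : ∃ j, δ j ≠ 0 := by
    by_contra h0
    push_neg at h0
    have h1 := hδ.1 (Classical.arbitrary Q0)
    have h2 : nvec δ = 0 := by funext j; simp [nvec, h0 j]
    rw [h2, bform_zero_right] at h1
    exact lt_irrefl 0 h1
  set τ : Q0 → ℕ := fun j => d j + n * δ j with hτdef
  have hτpos : ∀ j, 1 ≤ τ j := by
    intro j
    rcases hsupp j with h | h
    · have : 1 ≤ d j := Nat.one_le_iff_ne_zero.mpr h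
      simp only [hτdef]; omega
    · have h1 : 1 ≤ δ j := Nat.one_le_iff_ne_zero.mpr h
      have h2 : n * 1 ≤ n * δ j := Nat.mul_le_mul_left n h1
      simp only [hτdef]; omega
  have hτn : ∀ j, δ j ≠ 0 → n ≤ τ j := by
    intro j h
    have h1 : 1 ≤ δ j := Nat.one_le_iff_ne_zero.mpr h
    have h2 : n * 1 ≤ n * δ j := Nat.mul_le_mul_left n h1
    simp only [hτdef]; omega
  have hτne : τ ≠ 0 := by
    rw [Function.ne_iff]
    refine ⟨jδ, ?_⟩
    have := hτpos jδ
    have h0 : (0 : Q0 → ℕ) jδ = 0 := rfl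
    omega
  have hB2 : 2 ≤ ∑ j, τ j := by
    have h1 : n ≤ τ jδ := hτn jδ hjδ
    have h2 : τ jδ ≤ ∑ j, τ j :=
      Finset.single_le_sum (f := fun j => τ j) (fun _ _ => Nat.zero_le _) (mem_univ jδ)
    omega
  -- flag bound for Kser τ
  have hflag : ∀ D, ValidD τ D → D ≠ trivFlag τ →
      bform E (nvec τ) (nvec τ) + (i + 1) ≤ kval E D := by
    intro D hD hne
    have hD1 : D 1 ≠ 0 := fun h1 => hne (hD.eq_trivFlag h1)
    obtain ⟨j1, hj1⟩ := Function.ne_iff.mp hD1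
    have hD0 : D 0 ≠ 0 := by
      rw [Function.ne_iff]
      refine ⟨j1, ?_⟩
      have h1 : D 1 j1 ≤ D 0 j1 := hD.1 0 j1
      have h0 : (0 : Q0 → ℕ) j1 = 0 := rfl
      omega
    have hzero : ∀ k, (∑ j, τ j) ≤ k → D k = 0 := fun k hk => hD.zero_of_ge k hk
    rw [kval_eq_sum E hzero]
    exact hA n hnN₀ (Finset.range (∑ j, τ j)) (fun k => D k)
      (fun j => hD.sum_range hzero j) 0 (Finset.mem_range.mpr (by omega)) 1
      (Finset.mem_range.mpr (by omega)) (by omega) hD0 hD1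
  obtain ⟨Rst, hRstVal, hKeq⟩ :=
    Kser_decomp E τ (bform E (nvec τ) (nvec τ) + (i + 1)) hflag
  -- the tail of the Hua sum
  have hhua : ∀ l ∈ (Finset.Icc 1 (∑ j, τ j)).erase 1,
      Val (bform E (nvec τ) (nvec τ) + (i + 1))
        (((-1 : LaurentSeries ℚ) ^ (l + 1) / (l : LaurentSeries ℚ)) * huaInner E τ l) := by
    intro l hl
    obtain ⟨hlne, hlm⟩ := Finset.mem_erase.mp hl
    obtain ⟨hl1, _⟩ := Finset.mem_Icc.mp hlm
    have hl2 : 2 ≤ l := by omega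
    have h := huaInner_val E τ l hl2 (bform E (nvec τ) (nvec τ) + (i + 1))
      (fun s p hs m₁ h₁ m₂ h₂ hnem hp1 hp2 => hA n hnN₀ s p hs m₁ h₁ m₂ h₂ hnem hp1 hp2)
    exact ((Val.scalar l hl1).mul h).cast (by ring)
  have hRest2 : Val (bform E (nvec τ) (nvec τ) + (i + 1))
      (∑ l ∈ (Finset.Icc 1 (∑ j, τ j)).erase 1,
        ((-1 : LaurentSeries ℚ) ^ (l + 1) / (l : LaurentSeries ℚ)) * huaInner E τ l) :=
    Val.sum _ _ hhua
  have h1mem : 1 ∈ Finset.Icc 1 (∑ j, τ j) := Finset.mem_Icc.mpr ⟨le_refl 1, by omega⟩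
  have hGser : Gser E τ = tls ^ (-bform E (nvec τ) (nvec τ)) * (1 - tls) *
      ∑ l ∈ Finset.Icc 1 (∑ j, τ j),
        ((-1 : LaurentSeries ℚ) ^ (l + 1) / (l : LaurentSeries ℚ)) * huaInner E τ l := rfl
  have hc1 : ((-1 : LaurentSeries ℚ) ^ (1 + 1) / ((1 : ℕ) : LaurentSeries ℚ)) = 1 := by
    norm_num
  have hzz : tls ^ (-bform E (nvec τ) (nvec τ)) * tls ^ (bform E (nvec τ) (nvec τ)) = 1 := by
    rw [← zpow_add₀ tls_ne_zero]
    simp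
  set T0 : LaurentSeries ℚ := (1 - tls) * (phiV τ)⁻¹ with hT0
  have hmain : Gser E τ = T0 + tls ^ (-bform E (nvec τ) (nvec τ)) * (1 - tls) *
      (Rst + ∑ l ∈ (Finset.Icc 1 (∑ j, τ j)).erase 1,
        ((-1 : LaurentSeries ℚ) ^ (l + 1) / (l : LaurentSeries ℚ)) * huaInner E τ l) := by
    rw [hGser, ← Finset.add_sum_erase _ _ h1mem, hc1, one_mul, huaInner_one E τ hτne, hKeq, hT0]
    linear_combination ((1 - tls) * (phiV τ)⁻¹) * hzz
  have hdiff1 : Val (i + 1 : ℤ) (Gser E τ - T0) := by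
    rw [hmain]
    have h5 : T0 + tls ^ (-bform E (nvec τ) (nvec τ)) * (1 - tls) *
        (Rst + ∑ l ∈ (Finset.Icc 1 (∑ j, τ j)).erase 1,
          ((-1 : LaurentSeries ℚ) ^ (l + 1) / (l : LaurentSeries ℚ)) * huaInner E τ l) - T0 =
        tls ^ (-bform E (nvec τ) (nvec τ)) * (1 - tls) *
        (Rst + ∑ l ∈ (Finset.Icc 1 (∑ j, τ j)).erase 1,
          ((-1 : LaurentSeries ℚ) ^ (l + 1) / (l : LaurentSeries ℚ)) * huaInner E τ l) := by
      ring
    rw [h5]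
    exact (((Val_tls_zpow _).mul Val_one_sub_tls).mul (hRstVal.add hRest2)).cast (by ring)
  -- the partition side
  set T1 : LaurentSeries ℚ := (1 - tls) * partGFL ^ (Finset.univ.filter fun j => δ j ≠ 0).card *
      ∏ j ∈ Finset.univ.filter (fun j => δ j = 0), (phiL (d j))⁻¹ with hT1
  set W : LaurentSeries ℚ := ∏ j ∈ Finset.univ.filter (fun j => δ j = 0), (phiL (d j))⁻¹
    with hW
  have hfe : (Finset.univ.filter fun j => ¬ δ j ≠ 0) = (Finset.univ.filter fun j => δ j = 0) := by
    ext j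
    simp [not_not]
  have hT0split : T0 = (1 - tls) *
      ((∏ j ∈ Finset.univ.filter (fun j => δ j ≠ 0), (phiL (τ j))⁻¹) * W) := by
    rw [hT0, phiV, ← Finset.prod_inv_distrib,
      ← Finset.prod_filter_mul_prod_filter_not univ (fun j => δ j ≠ 0)
        (fun j => (phiL (τ j))⁻¹), hfe]
    congr 1
    congr 1
    rw [hW]
    refine Finset.prod_congr rfl fun j hj => ?_
    have hj0 : δ j = 0 := (Finset.mem_filter.mp hj).2
    have hτj : τ j = d j := by simp only [hτdef, hj0]; ring
    rw [hτj]
  have hVal_partGFL : Val 0 partGFL :=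
    ⟨PowerSeries.mk fun m => (Nat.card (Nat.Partition m) : ℚ), by
      rw [zpow_zero, one_mul]; exact partGFL_eq⟩
  have hfac : Val (i + 1 : ℤ)
      ((∏ j ∈ Finset.univ.filter (fun j => δ j ≠ 0), (phiL (τ j))⁻¹) -
        ∏ _j ∈ Finset.univ.filter (fun j => δ j ≠ 0), partGFL) := by
    refine Val.prod_sub _ _ _ _ ?_ ?_ ?_
    · intro j hj
      rw [phiL_inv_eq]
      exact Val.coe _
    · intro j hj
      exact hVal_partGFL
    · intro j hj
      have hjS : δ j ≠ 0 := (Finset.mem_filter.mp hj).2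
      have h1 : n ≤ τ j := hτn j hjS
      have h2 : (i + 1 : ℕ) ≤ τ j + 1 := by omega
      have := Val_phiLinv_sub_partGFL (τ j) (i + 1) h2
      exact this.cast (by push_cast; ring)
  have hWVal : Val 0 W := by
    rw [hW]
    refine (Val.prod _ _ (fun _ => 0) ?_).cast (by simp)
    intro j hj
    rw [phiL_inv_eq]
    exact Val.coe _
  have hdiff2 : Val (i + 1 : ℤ) (T0 - T1) := by
    have hcard : partGFL ^ (Finset.univ.filter fun j => δ j ≠ 0).card
        = ∏ _j ∈ Finset.univ.filter (fun j => δ j ≠ 0), partGFL := (Finset.prod_const _).symm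
    have heq : T0 - T1 = (1 - tls) * W *
        ((∏ j ∈ Finset.univ.filter (fun j => δ j ≠ 0), (phiL (τ j))⁻¹) -
          ∏ _j ∈ Finset.univ.filter (fun j => δ j ≠ 0), partGFL) := by
      rw [hT0split, hT1, hcard]
      ring
    rw [heq]
    exact ((Val_one_sub_tls.mul hWVal).mul hfac).cast (by ring)
  have hdiff : Val (i + 1 : ℤ) (Gser E τ - T1) := by
    have h := hdiff1.add hdiff2
    rwa [sub_add_sub_cancel] at h
  have hco := hdiff.coeff_eq_zero (i := (i : ℤ)) (by
    have : (i : ℤ) < (i : ℤ) + 1 := by omega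
    exact_mod_cast this)
  rw [HahnSeries.coeff_sub] at hco
  exact sub_eq_zero.mp hco
end
end

/-- Theorem 4.4 at the level of Hua's formula: for a quiver without loops with Euler
matrix `E`, `δ` satisfying (∗) for the Cartan form `C = E + Eᵀ` and `d` with
`supp d ∪ supp δ = Q0`, every coefficient of the normalized Hua series `G_{d+nδ}(t)`
eventually equals the corresponding coefficient of
`(1 - t) P(t)^{|supp δ|} ∏_{j ∉ supp δ} φ_{d_j}(t)⁻¹`. -/
theorem hua_coeff_stabilizes
    {Q0 : Type*} [Fintype Q0] [DecidableEq Q0] [Nonempty Q0]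
    (E : Q0 → Q0 → ℤ) (hdiag : ∀ i, E i i = 1) (hoff : ∀ i j, i ≠ j → E i j ≤ 0)
    (δ : Q0 → ℕ) (hδ : condStar (fun i j => E i j + E j i) δ)
    (d : Q0 → ℕ) (hsupp : ∀ i, d i ≠ 0 ∨ δ i ≠ 0) :
    ∀ i : ℕ, ∃ N : ℕ, ∀ n ≥ N,
      (Gser E fun j => d j + n * δ j).coeff (i : ℤ) =
        ((1 - tls) * partGFL ^ (Finset.univ.filter fun j => δ j ≠ 0).card *
            ∏ j ∈ Finset.univ.filter (fun j => δ j = 0), (phiL (d j))⁻¹).coeff (i : ℤ) := by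
  exact hua_coeff_stabilizes' E hdiag hoff δ hδ d hsupp
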